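/- arXiv:1810.08665 — 3 statements merged into one kernel-verified Lean document; each statement's English description precedes it below -/
import Mathlib

section
/- For any simple graph G, gon(G) ≥ min{val(v) : v ∈ V(G)}, the minimum valence of a vertex of G. -/
/-- A finite loopless multigraph: a finite vertex type, a finite edge type,
and an assignment of an unordered pair of distinct endpoints to each edge. -/
structure Multigraph where
  V : Type
  E : Type
  [fintypeV : Fintype V]
  [fintypeE : Fintype E]
  [decEqV : DecidableEq V]
  ends : E → Sym2 V
  loopless : ∀ e, ¬ (ends e).IsDiag

attribute [instance] Multigraph.fintypeV Multigraph.fintypeE Multigraph.decEqV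

namespace Multigraph

/-- The graph obtained by deleting the edges in `W` is connected (finite graphs are
connected iff the vertex set is nonempty and every nonempty proper vertex subset
has an edge leaving it). -/
def ConnectedWithout (G : Multigraph) (W : Set G.E) : Prop :=
  Nonempty G.V ∧
    ∀ A : Finset G.V, A.Nonempty → A ≠ Finset.univ →
      ∃ e, e ∉ W ∧ ∃ u v, G.ends e = s(u, v) ∧ u ∈ A ∧ v ∉ A

/-- `G` is connected. -/
def Connected (G : Multigraph) : Prop := G.ConnectedWithout ∅

/-- `G` is `k`-edge-connected: deleting any set of at most `k - 1` edges
leaves a connected graph. -/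
def EdgeConnected (G : Multigraph) (k : ℕ) : Prop :=
  ∀ W : Finset G.E, W.card < k → G.ConnectedWithout ↑W

/-- An edge is a bridge if deleting it disconnects the graph. -/
def IsBridge (G : Multigraph) (e : G.E) : Prop := ¬ G.ConnectedWithout {e}

/-- The graph obtained by deleting the vertices in `U` (and all incident edges)
is connected. -/
def ConnectedAvoiding (G : Multigraph) (U : Set G.V) : Prop :=
  (∃ v, v ∉ U) ∧
    ∀ A : Finset G.V, A.Nonempty → (∀ a ∈ A, a ∉ U) → (∃ w, w ∉ U ∧ w ∉ A) →
      ∃ e u v, G.ends e = s(u, v) ∧ u ∈ A ∧ v ∉ A ∧ v ∉ U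

/-- `G` is `k`-vertex-connected: deleting any set of at most `k - 1` vertices
leaves a connected graph. -/
def VertexConnected (G : Multigraph) (k : ℕ) : Prop :=
  ∀ U : Finset G.V, U.card < k → G.ConnectedAvoiding ↑U

/-- `G` is simple: no two distinct edges have the same pair of endpoints. -/
def Simple (G : Multigraph) : Prop :=
  ∀ e e' : G.E, G.ends e = G.ends e' → e = e'

/-- The genus `g(G) = |E| - |V| + 1`. -/
def genus (G : Multigraph) : ℤ :=
  (Fintype.card G.E : ℤ) - (Fintype.card G.V : ℤ) + 1

/-- A tree is a connected graph of genus 0. -/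
def IsTree (G : Multigraph) : Prop := G.Connected ∧ G.genus = 0

/-- The number of edges joining `u` and `v`. -/
noncomputable def numEdges (G : Multigraph) (u v : G.V) : ℕ :=
  Set.ncard {e : G.E | G.ends e = s(u, v)}

/-- The valence of a vertex: the number of incident edges. -/
noncomputable def valence (G : Multigraph) (v : G.V) : ℕ :=
  Set.ncard {e : G.E | v ∈ G.ends e}

/-- A divisor on `G`: an element of the free abelian group on `V(G)`. -/
abbrev Divisor (G : Multigraph) : Type := G.V → ℤ

/-- The degree of a divisor: the sum of its coefficients. -/
def degree (G : Multigraph) (D : G.Divisor) : ℤ := ∑ v, D v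

/-- A divisor is effective if all its coefficients are nonnegative. -/
def Effective (G : Multigraph) (D : G.Divisor) : Prop := ∀ v, 0 ≤ D v

/-- The Laplacian of `G` applied to an integer vector `f`. -/
noncomputable def laplacian (G : Multigraph) (f : G.V → ℤ) : G.Divisor :=
  fun v => ∑ w, (G.numEdges v w : ℤ) * (f v - f w)

/-- Linear equivalence of divisors: the difference is in the image of the Laplacian. -/
def LinEquiv (G : Multigraph) (D D' : G.Divisor) : Prop :=
  ∃ f : G.V → ℤ, D - D' = G.laplacian f

/-- `D - F` is equivalent to an effective divisor for every effective `F` of degree `k`. -/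
def RankGe (G : Multigraph) (D : G.Divisor) (k : ℤ) : Prop :=
  ∀ F : G.Divisor, G.Effective F → G.degree F = k →
    ∃ E' : G.Divisor, G.Effective E' ∧ G.LinEquiv (D - F) E'

/-- The Baker–Norine rank of a divisor. -/
noncomputable def rank (G : Multigraph) (D : G.Divisor) : ℤ :=
  sSup {r : ℤ | r = -1 ∨ (0 ≤ r ∧ G.RankGe D r)}

/-- The (divisorial) gonality of `G`: the minimum degree of an effective divisor
of rank at least 1. -/
noncomputable def gonality (G : Multigraph) : ℕ :=
  sInf {n : ℕ | ∃ D : G.Divisor, G.Effective D ∧ G.degree D = (n : ℤ) ∧ 1 ≤ G.rank D}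

end Multigraph

/-- A morphism of multigraphs: vertices map to vertices, and each edge maps either
to an edge joining the images of its endpoints (if they are distinct) or to the
common image of its endpoints. -/
structure Morphism (G G' : Multigraph) where
  vertexMap : G.V → G'.V
  edgeMap : G.E → G'.E ⊕ G'.V
  map_edge_of_eq : ∀ e u v, G.ends e = s(u, v) → vertexMap u = vertexMap v →
    edgeMap e = Sum.inr (vertexMap u)
  map_edge_of_ne : ∀ e u v, G.ends e = s(u, v) → vertexMap u ≠ vertexMap v →
    ∃ e', edgeMap e = Sum.inl e' ∧ G'.ends e' = s(vertexMap u, vertexMap v)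

namespace Morphism

variable {G G' : Multigraph}

/-- The multiplicity `m_φ(v)` of `φ` at `v` with respect to an edge `e'` of `G'`. -/
noncomputable def mult (φ : Morphism G G') (v : G.V) (e' : G'.E) : ℕ :=
  Set.ncard {e : G.E | v ∈ G.ends e ∧ φ.edgeMap e = Sum.inl e'}

/-- `φ` is harmonic if `m_φ(v)` does not depend on the chosen edge `e'`
incident to `φ(v)`. -/
def Harmonic (φ : Morphism G G') : Prop :=
  ∀ (v : G.V) (e₁ e₂ : G'.E),
    φ.vertexMap v ∈ G'.ends e₁ → φ.vertexMap v ∈ G'.ends e₂ →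
      φ.mult v e₁ = φ.mult v e₂

/-- `φ` is non-degenerate if `m_φ(v) > 0` for every vertex `v`. -/
def Nondegenerate (φ : Morphism G G') : Prop :=
  ∀ (v : G.V) (e' : G'.E), φ.vertexMap v ∈ G'.ends e' → 0 < φ.mult v e'

/-- `φ` has degree `d`: every edge of `G'` has exactly `d` preimages. -/
def HasDegree (φ : Morphism G G') (d : ℕ) : Prop :=
  Nonempty G'.E ∧ ∀ e' : G'.E, Set.ncard {e : G.E | φ.edgeMap e = Sum.inl e'} = d

end Morphism

namespace Stmt7Aux

open Finset

variable {G : Multigraph}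

/-- Edge multiplicity as a `Finset.card`. -/
def nE (G : Multigraph) (u v : G.V) : ℕ :=
  (Finset.univ.filter (fun e => G.ends e = s(u, v))).card

lemma numEdges_eq (u v : G.V) : G.numEdges u v = nE G u v := by
  classical
  rw [Multigraph.numEdges, Set.ncard_eq_toFinset_card', Set.toFinset_setOf]
  rfl

lemma nE_symm (u v : G.V) : nE G u v = nE G v u := by
  unfold nE
  congr 1
  apply Finset.filter_congr
  intro e _
  rw [Sym2.eq_swap (a := u)]

lemma nE_self (v : G.V) : nE G v v = 0 := by
  unfold nE
  rw [Finset.card_eq_zero, Finset.filter_eq_empty_iff]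
  intro e _ h
  apply G.loopless e
  rw [h]
  exact rfl

lemma nE_le_one (hs : G.Simple) (u v : G.V) : nE G u v ≤ 1 := by
  unfold nE
  apply Finset.card_le_one.mpr
  intro a ha b hb
  simp only [Finset.mem_filter] at ha hb
  exact hs a b (ha.2.trans hb.2.symm)

lemma valence_eq_sum (v : G.V) : G.valence v = ∑ u, nE G v u := by
  classical
  rw [Multigraph.valence, Set.ncard_eq_toFinset_card', Set.toFinset_setOf]
  have : (Finset.univ.filter (fun e => v ∈ G.ends e)) =
      Finset.univ.biUnion (fun u => Finset.univ.filter (fun e => G.ends e = s(v, u))) := by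
    ext e
    simp [Sym2.mem_iff_exists]
  rw [this, Finset.card_biUnion]
  · rfl
  · intro a _ b _ hab
    apply Finset.disjoint_left.mpr
    intro e he he'
    simp only [Finset.mem_filter, Finset.mem_univ, true_and] at he he'
    exact hab (Sym2.congr_right.mp (he.symm.trans he'))

lemma valence_le (hs : G.Simple) (v : G.V) :
    G.valence v + 1 ≤ Fintype.card G.V := by
  classical
  rw [valence_eq_sum]
  have h1 : ∑ u, nE G v u = ∑ u ∈ Finset.univ.erase v, nE G v u := by
    rw [Finset.sum_erase _ (nE_self v)]
  rw [h1]
  have h2 : ∑ u ∈ Finset.univ.erase v, nE G v u ≤ ∑ _u ∈ Finset.univ.erase v, 1 :=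
    Finset.sum_le_sum (fun u _ => nE_le_one hs v u)
  simp only [Finset.sum_const, smul_eq_mul, mul_one] at h2
  have h3 : (Finset.univ.erase v).card + 1 = Fintype.card G.V := by
    rw [Finset.card_erase_of_mem (Finset.mem_univ v), Finset.card_univ]
    have : 1 ≤ Fintype.card G.V := Fintype.card_pos_iff.mpr ⟨v⟩
    omega
  omega

lemma valence_le_cardE (v : G.V) : G.valence v ≤ Fintype.card G.E := by
  classical
  rw [Multigraph.valence, Set.ncard_eq_toFinset_card', Set.toFinset_setOf]
  exact le_trans (Finset.card_le_card (Finset.filter_subset _ _)) (by simp)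

lemma lap_apply (f : G.V → ℤ) (v : G.V) :
    G.laplacian f v = ∑ w, (nE G v w : ℤ) * (f v - f w) := by
  rw [Multigraph.laplacian]
  exact Finset.sum_congr rfl (fun w _ => by rw [numEdges_eq])

lemma lap_sum (f : G.V → ℤ) : ∑ v, G.laplacian f v = 0 := by
  classical
  have h : ∑ v, G.laplacian f v = ∑ v, ∑ w, (nE G v w : ℤ) * (f v - f w) :=
    Finset.sum_congr rfl (fun v _ => lap_apply f v)
  rw [h]
  have h2 : ∑ v, ∑ w, (nE G v w : ℤ) * (f v - f w)
      = ∑ w, ∑ v, (nE G v w : ℤ) * (f v - f w) := Finset.sum_comm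
  have h3 : ∑ w, ∑ v, (nE G v w : ℤ) * (f v - f w)
      = - ∑ v, ∑ w, (nE G v w : ℤ) * (f v - f w) := by
    rw [← Finset.sum_neg_distrib]
    apply Finset.sum_congr rfl
    intro w _
    rw [← Finset.sum_neg_distrib]
    apply Finset.sum_congr rfl
    intro v _
    rw [nE_symm]
    ring
  omega

lemma lap_const_add (f : G.V → ℤ) (c : ℤ) (v : G.V) :
    G.laplacian (fun w => f w + c) v = G.laplacian f v := by
  rw [lap_apply, lap_apply]
  apply Finset.sum_congr rfl
  intro w _
  ring_nf

/-- Gluing estimate: if `h ≥ p` everywhere and `h v = p v`, then `L h v ≤ L p v`. -/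
lemma lap_le_of_touch {p h : G.V → ℤ} (hle : ∀ u, p u ≤ h u) {v : G.V}
    (hv : h v = p v) : G.laplacian h v ≤ G.laplacian p v := by
  rw [lap_apply, lap_apply]
  apply Finset.sum_le_sum
  intro w _
  have : h v - h w ≤ p v - p w := by
    have := hle w; omega
  exact mul_le_mul_of_nonneg_left this (by positivity)

end Stmt7Aux
namespace Stmt7Aux

open Finset

variable {G : Multigraph}

lemma lap_apply' (f : G.V → ℤ) (u : G.V) :
    G.laplacian f u = (G.valence u : ℤ) * f u - ∑ w, (nE G u w : ℤ) * f w := by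
  rw [lap_apply, valence_eq_sum]
  push_cast
  rw [Finset.sum_mul, ← Finset.sum_sub_distrib]
  apply Finset.sum_congr rfl
  intro w _
  ring

lemma lap_const (c : ℤ) (v : G.V) : G.laplacian (fun _ => c) v = 0 := by
  rw [lap_apply]
  apply Finset.sum_eq_zero
  intro w _
  ring

lemma nE_pos_of_ends {e : G.E} {u v : G.V} (h : G.ends e = s(u, v)) : 1 ≤ nE G u v := by
  apply Finset.card_pos.mpr
  exact ⟨e, Finset.mem_filter.mpr ⟨Finset.mem_univ e, h⟩⟩

lemma lap_ind_mem (B : Finset G.V) {v : G.V} (hv : v ∈ B) :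
    G.laplacian (fun w => if w ∈ B then (1:ℤ) else 0) v
      = ∑ u ∈ Finset.univ \ B, (nE G v u : ℤ) := by
  classical
  rw [lap_apply]
  rw [← Finset.sum_sdiff (Finset.subset_univ B)]
  have h1 : ∑ u ∈ B, (nE G v u : ℤ) * ((if v ∈ B then (1:ℤ) else 0) - (if u ∈ B then (1:ℤ) else 0)) = 0 := by
    apply Finset.sum_eq_zero
    intro u hu
    simp [hv, hu]
  have h2 : ∑ u ∈ Finset.univ \ B, (nE G v u : ℤ) * ((if v ∈ B then (1:ℤ) else 0) - (if u ∈ B then (1:ℤ) else 0))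
      = ∑ u ∈ Finset.univ \ B, (nE G v u : ℤ) := by
    apply Finset.sum_congr rfl
    intro u hu
    have : u ∉ B := (Finset.mem_sdiff.mp hu).2
    simp [hv, this]
  rw [h1, h2, add_zero]

lemma lap_ind_not_mem (B : Finset G.V) {v : G.V} (hv : v ∉ B) :
    G.laplacian (fun w => if w ∈ B then (1:ℤ) else 0) v ≤ 0 := by
  classical
  rw [lap_apply]
  apply Finset.sum_nonpos
  intro u _
  apply mul_nonpos_of_nonneg_of_nonpos (by positivity)
  by_cases hu : u ∈ B <;> simp [hv, hu]

lemma lap_add (f g : G.V → ℤ) (v : G.V) :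
    G.laplacian (fun w => f w + g w) v = G.laplacian f v + G.laplacian g v := by
  rw [lap_apply, lap_apply, lap_apply, ← Finset.sum_add_distrib]
  apply Finset.sum_congr rfl
  intro w _
  ring

/-- The bound function. -/
def bβ (M d : ℤ) : ℕ → ℤ
  | 0 => 0
  | k+1 => (M + 1) * bβ M d k + d

lemma bβ_nonneg {M d : ℤ} (hM : 0 ≤ M) (hd : 0 ≤ d) : ∀ k, 0 ≤ bβ M d k
  | 0 => le_refl 0
  | (k+1) => by
      have := bβ_nonneg hM hd k
      have h1 : 0 ≤ (M+1) * bβ M d k := mul_nonneg (by omega) this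
      simp only [bβ]; omega

lemma bβ_mono {M d : ℤ} (hM : 0 ≤ M) (hd : 0 ≤ d) (k : ℕ) : bβ M d k ≤ bβ M d (k+1) := by
  have h0 := bβ_nonneg hM hd k
  have : bβ M d (k+1) = (M+1) * bβ M d k + d := rfl
  nlinarith

end Stmt7Aux
namespace Stmt7Aux

open Finset

variable {G : Multigraph}

/-- Any nonnegative valid potential vanishing somewhere is uniformly bounded. -/
lemma bound_lemma (hG : G.Connected) (D : G.Divisor) (hD : G.Effective D)
    (f : G.V → ℤ) (hf : ∀ v, G.laplacian f v ≤ D v) (hf0 : ∀ v, 0 ≤ f v)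
    (w₀ : G.V) (hw₀ : f w₀ = 0) :
    ∀ v, f v ≤ bβ (Fintype.card G.E : ℤ) (G.degree D) (Fintype.card G.V) := by
  classical
  set M : ℤ := (Fintype.card G.E : ℤ) with hM
  set d : ℤ := G.degree D with hd
  have hM0 : 0 ≤ M := by positivity
  have hd0 : 0 ≤ d := Finset.sum_nonneg (fun v _ => hD v)
  have hβ0 := bβ_nonneg (M := M) (d := d) hM0 hd0
  -- each E v := D v - L f v is between 0 and d
  have hE0 : ∀ v, 0 ≤ D v - G.laplacian f v := fun v => by have := hf v; omega
  have hEsum : ∑ v, (D v - G.laplacian f v) = d := by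
    rw [Finset.sum_sub_distrib, lap_sum, sub_zero, hd, Multigraph.degree]
  have hEle : ∀ v, D v - G.laplacian f v ≤ d := by
    intro v
    rw [← hEsum]
    exact Finset.single_le_sum (fun u _ => hE0 u) (Finset.mem_univ v)
  -- edge propagation step
  have hstep : ∀ u v : G.V, 1 ≤ nE G u v → ∀ b : ℤ, 0 ≤ b → f u ≤ b →
      f v ≤ (M + 1) * b + d := by
    intro u v huv b hb hub
    have h1 : -d ≤ G.laplacian f u := by have h := hEle u; have := hD u; omega
    have h2 : ∑ w, (nE G u w : ℤ) * f w ≤ (G.valence u : ℤ) * f u + d := by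
      have := lap_apply' f u
      omega
    have h3 : (nE G u v : ℤ) * f v ≤ ∑ w, (nE G u w : ℤ) * f w :=
      Finset.single_le_sum (fun w _ => mul_nonneg (by positivity) (hf0 w)) (Finset.mem_univ v)
    have h4 : f v ≤ (nE G u v : ℤ) * f v := by
      have h5 : (1 : ℤ) ≤ (nE G u v : ℤ) := by exact_mod_cast huv
      nlinarith [hf0 v]
    have h6 : (G.valence u : ℤ) * f u ≤ M * b := by
      have h7 : (G.valence u : ℤ) ≤ M := by rw [hM]; exact_mod_cast valence_le_cardE u
      have := hf0 u
      nlinarith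
    nlinarith
  -- growing family of bounded vertices
  set S : ℕ → Finset G.V := fun k => Finset.univ.filter (fun v => f v ≤ bβ M d k) with hS
  have hmono : ∀ k, S k ⊆ S (k+1) := by
    intro k v hv
    simp only [hS, Finset.mem_filter, Finset.mem_univ, true_and] at hv ⊢
    exact le_trans hv (bβ_mono hM0 hd0 k)
  have hgrow : ∀ k : ℕ, Finset.univ ⊆ S k ∨ k + 1 ≤ (S k).card := by
    intro k
    induction k with
    | zero =>
      right
      apply Finset.card_pos.mpr
      refine ⟨w₀, ?_⟩
      simp only [hS, Finset.mem_filter, Finset.mem_univ, true_and, hw₀]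
      exact hβ0 0
    | succ k ih =>
      rcases ih with h | h
      · exact Or.inl (h.trans (hmono k))
      by_cases hu : Finset.univ ⊆ S k
      · exact Or.inl (hu.trans (hmono k))
      right
      have hne : (S k).Nonempty := Finset.card_pos.mp (by omega)
      have hnu : S k ≠ Finset.univ := fun hq => hu (hq ▸ Finset.Subset.refl _)
      obtain ⟨e, -, u, v, hends, huS, hvS⟩ := hG.2 (S k) hne hnu
      have hnuv : 1 ≤ nE G u v := nE_pos_of_ends hends
      have hub : f u ≤ bβ M d k := by
        simpa [hS] using huS
      have hvb : f v ≤ bβ M d (k+1) := by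
        have := hstep u v hnuv (bβ M d k) (hβ0 k) hub
        simpa [bβ] using this
      have hvmem : v ∈ S (k+1) := by simp [hS, hvb]
      have hsub : insert v (S k) ⊆ S (k+1) := by
        intro z hz
        rcases Finset.mem_insert.mp hz with rfl | hz
        · exact hvmem
        · exact hmono k hz
      have : (S k).card + 1 ≤ (S (k+1)).card := by
        have hcard := Finset.card_le_card hsub
        rwa [Finset.card_insert_of_notMem (fun hc => hvS hc)] at hcard
      omega
  intro v
  rcases hgrow (Fintype.card G.V) with h | h
  · have : v ∈ S (Fintype.card G.V) := h (Finset.mem_univ v)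
    simpa [hS] using this
  · exfalso
    have : (S (Fintype.card G.V)).card ≤ Fintype.card G.V := by
      simpa using Finset.card_le_card (Finset.subset_univ (S (Fintype.card G.V)))
    omega

end Stmt7Aux
namespace Stmt7Aux

open Finset

variable {G : Multigraph}

lemma lap_sub_const (f : G.V → ℤ) (c : ℤ) (v : G.V) :
    G.laplacian (fun w => f w - c) v = G.laplacian f v := by
  rw [lap_apply, lap_apply]
  apply Finset.sum_congr rfl
  intro w _
  ring_nf

theorem key (G : Multigraph) (hG : G.Connected) (hs : G.Simple) (D : G.Divisor)
    (hD : G.Effective D)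
    (hserve : ∀ q : G.V, ∃ f : G.V → ℤ,
      ∀ v, (if v = q then (1:ℤ) else 0) + G.laplacian f v ≤ D v) :
    ∃ v, (G.valence v : ℤ) ≤ G.degree D := by
  classical
  by_contra hcon
  push_neg at hcon
  set d : ℤ := G.degree D with hd
  have hd0 : 0 ≤ d := Finset.sum_nonneg (fun v _ => hD v)
  set n : ℕ := Fintype.card G.V with hn
  obtain ⟨v₀⟩ := hG.1
  have hdn : d + 2 ≤ (n : ℤ) := by
    have h1 := hcon v₀
    have h2 : (G.valence v₀ : ℤ) + 1 ≤ (n : ℤ) := by exact_mod_cast valence_le hs v₀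
    omega
  -- a vertex with no chips
  have hzero : ∃ q, D q = 0 := by
    by_contra hz
    push_neg at hz
    have h2 : (n : ℤ) ≤ d := by
      rw [hd, Multigraph.degree]
      calc (n : ℤ) = ∑ _v : G.V, (1 : ℤ) := by simp [hn]
        _ ≤ ∑ v, D v := Finset.sum_le_sum (fun v _ => by have := hD v; have := hz v; omega)
    omega
  obtain ⟨q, hq⟩ := hzero
  obtain ⟨finit, hfinit⟩ := hserve q
  -- the family of valid nonconstant potentials, measured by the size of the argmin set
  set Wof : (G.V → ℤ) → Finset G.V :=
    fun f => Finset.univ.filter (fun v => ∀ u, f v ≤ f u) with hWof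
  have memWof : ∀ (f : G.V → ℤ) (v : G.V), v ∈ Wof f ↔ ∀ u, f v ≤ f u := by
    intro f v
    simp [hWof]
  set A : Set ℕ := {k : ℕ | ∃ f : G.V → ℤ,
      (∀ v, G.laplacian f v ≤ D v) ∧ Wof f ≠ Finset.univ ∧ (Wof f).card = k} with hA
  have hAne : A.Nonempty := by
    refine ⟨(Wof finit).card, finit, ?_, ?_, rfl⟩
    · intro v
      have h := hfinit v
      by_cases hv : v = q
      · subst hv; simp only [if_pos rfl] at h; omega
      · simp only [if_neg hv] at h; omega
    · intro hWu
      have hconst : ∀ v u, finit v ≤ finit u := by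
        intro v u
        have : v ∈ Wof finit := hWu ▸ Finset.mem_univ v
        exact (memWof finit v).mp this u
      have hlap : G.laplacian finit q = 0 := by
        rw [lap_apply]
        apply Finset.sum_eq_zero
        intro w _
        have h1 := hconst q w
        have h2 := hconst w q
        have : finit q - finit w = 0 := by omega
        rw [this, mul_zero]
      have h := hfinit q
      rw [if_pos rfl, hlap, hq] at h
      omega
  set a : ℕ := sInf A with ha
  obtain ⟨f₂, hf₂valid, hf₂nu, hf₂card⟩ := Nat.sInf_mem hAne
  set W : Finset G.V := Wof f₂ with hW
  obtain ⟨w₀, -, hw₀min⟩ := Finset.exists_min_image Finset.univ f₂ ⟨v₀, Finset.mem_univ v₀⟩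
  have hw₀W : w₀ ∈ W := (memWof f₂ w₀).mpr (fun u => hw₀min u (Finset.mem_univ u))
  have hWne : W.Nonempty := ⟨w₀, hw₀W⟩
  -- the normalized potential
  set f₃ : G.V → ℤ := fun v => f₂ v - f₂ w₀ with hf₃
  have hf₃valid : ∀ v, G.laplacian f₃ v ≤ D v := by
    intro v
    rw [hf₃, lap_sub_const]
    exact hf₂valid v
  have hf₃W : ∀ w ∈ W, f₃ w = 0 := by
    intro w hw
    have h1 := (memWof f₂ w).mp hw w₀
    have h2 := hw₀min w (Finset.mem_univ w)
    simp only [hf₃]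
    omega
  have hf₃pos : ∀ v ∉ W, 1 ≤ f₃ v := by
    intro v hv
    rw [hW, memWof] at hv
    push_neg at hv
    obtain ⟨u, hu⟩ := hv
    have h2 := hw₀min u (Finset.mem_univ u)
    simp only [hf₃]
    omega
  -- the set 𝒮 of valid potentials vanishing exactly on W
  set memS : (G.V → ℤ) → Prop := fun f =>
    (∀ v, G.laplacian f v ≤ D v) ∧ (∀ w ∈ W, f w = 0) ∧ (∀ v ∉ W, 1 ≤ f v) with hmemS
  have hS₃ : memS f₃ := ⟨hf₃valid, hf₃W, hf₃pos⟩
  have hSnonneg : ∀ f, memS f → ∀ v, 0 ≤ f v := by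
    intro f hf v
    by_cases hv : v ∈ W
    · rw [hf.2.1 v hv]
    · have := hf.2.2 v hv; omega
  -- uniform bound and a sum-maximal element of 𝒮
  set C : ℤ := bβ (Fintype.card G.E : ℤ) d n with hC
  have hboundS : ∀ f, memS f → ∀ v, f v ≤ C := by
    intro f hf v
    exact bound_lemma hG D hD f hf.1 (hSnonneg f hf) w₀ (hf.2.1 w₀ hw₀W) v
  have hbdd : ∃ b : ℤ, ∀ z : ℤ, (∃ f, memS f ∧ ∑ v, f v = z) → z ≤ b := by
    refine ⟨(n : ℤ) * C, ?_⟩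
    rintro z ⟨f, hf, rfl⟩
    calc ∑ v, f v ≤ ∑ _v : G.V, C := Finset.sum_le_sum (fun v _ => hboundS f hf v)
      _ = (n : ℤ) * C := by rw [Finset.sum_const, Finset.card_univ, nsmul_eq_mul, hn]
  obtain ⟨s₁, ⟨fm, hfmS, hfmsum⟩, hmax⟩ :=
    Int.exists_greatest_of_bdd hbdd ⟨∑ v, f₃ v, f₃, hS₃, rfl⟩
  -- chips after firing fm
  set E : G.V → ℤ := fun v => D v - G.laplacian fm v with hE
  have hE0 : ∀ v, 0 ≤ E v := fun v => by have := hfmS.1 v; simp only [hE]; omega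
  have hEsum : ∑ v, E v = d := by
    simp only [hE]
    rw [Finset.sum_sub_distrib, lap_sum, sub_zero, hd, Multigraph.degree]
  -- W is rich: every vertex of W can pay its edges leaving W
  have hWrich : ∀ w ∈ W, D w + ∑ u ∈ Finset.univ \ W, (nE G w u : ℤ) ≤ E w := by
    intro w hw
    have h1 : G.laplacian fm w = - ∑ u, (nE G w u : ℤ) * fm u := by
      rw [lap_apply' fm w, hfmS.2.1 w hw, mul_zero, zero_sub]
    have h2 : ∑ u ∈ Finset.univ \ W, (nE G w u : ℤ)
        ≤ ∑ u ∈ Finset.univ \ W, (nE G w u : ℤ) * fm u := by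
      apply Finset.sum_le_sum
      intro u hu
      have hu' : u ∉ W := (Finset.mem_sdiff.mp hu).2
      have := hfmS.2.2 u hu'
      nlinarith [Nat.cast_nonneg (α := ℤ) (nE G w u)]
    have h3 : ∑ u ∈ Finset.univ \ W, (nE G w u : ℤ) * fm u ≤ ∑ u, (nE G w u : ℤ) * fm u := by
      apply Finset.sum_le_sum_of_subset_of_nonneg (Finset.subset_univ _)
      intro u _ _
      exact mul_nonneg (by positivity) (hSnonneg fm hfmS u)
    simp only [hE]
    omega
  -- valence bound inside W
  have hvalW : ∀ w ∈ W, (G.valence w : ℤ)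
      ≤ (∑ u ∈ Finset.univ \ W, (nE G w u : ℤ)) + ((W.card : ℤ) - 1) := by
    intro w hw
    have hsplit : (G.valence w : ℤ)
        = (∑ u ∈ Finset.univ \ W, (nE G w u : ℤ)) + ∑ u ∈ W, (nE G w u : ℤ) := by
      rw [valence_eq_sum]
      rw [show ((∑ u, nE G w u : ℕ) : ℤ) = ∑ u, (nE G w u : ℤ) from by push_cast; rfl]
      rw [Finset.sum_sdiff (Finset.subset_univ W)]
    have hin : ∑ u ∈ W, (nE G w u : ℤ) ≤ (W.card : ℤ) - 1 := by
      have h1 : ∑ u ∈ W, (nE G w u : ℤ) = ∑ u ∈ W.erase w, (nE G w u : ℤ) := by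
        rw [← Finset.add_sum_erase _ _ hw]
        rw [nE_self]
        push_cast
        ring
      have h2 : ∑ u ∈ W.erase w, (nE G w u : ℤ) ≤ ∑ _u ∈ W.erase w, (1 : ℤ) := by
        apply Finset.sum_le_sum
        intro u _
        exact_mod_cast nE_le_one hs w u
      have h3 : ((W.erase w).card : ℤ) = (W.card : ℤ) - 1 := by
        rw [Finset.card_erase_of_mem hw]
        have : 1 ≤ W.card := Finset.card_pos.mpr hWne
        omega
      rw [Finset.sum_const, nsmul_eq_mul, mul_one] at h2
      omega
    omega
  -- total chips dominate the chips on W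
  have hchipsW : ∑ w ∈ W, E w ≤ d := by
    rw [← hEsum]
    exact Finset.sum_le_sum_of_subset_of_nonneg (Finset.subset_univ W) (fun u _ _ => hE0 u)
  by_cases hsmall : (W.card : ℤ) ≤ d + 1
  · -- small argmin set: counting contradiction
    have h1 : ∀ w ∈ W, d + 2 - (W.card : ℤ) ≤ E w := by
      intro w hw
      have h2 := hWrich w hw
      have h3 := hvalW w hw
      have h4 := hcon w
      have h5 := hD w
      omega
    have h6 : (W.card : ℤ) * (d + 2 - (W.card : ℤ)) ≤ ∑ w ∈ W, E w := by
      have := Finset.card_nsmul_le_sum W E (d + 2 - (W.card : ℤ)) h1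
      rwa [nsmul_eq_mul] at this
    have h7 : 1 ≤ (W.card : ℤ) := by
      have : 1 ≤ W.card := Finset.card_pos.mpr hWne
      exact_mod_cast this
    nlinarith [mul_nonneg (by omega : (0:ℤ) ≤ (W.card : ℤ) - 1) (by omega : (0:ℤ) ≤ d + 1 - (W.card : ℤ))]
  · -- large argmin set
    push_neg at hsmall
    -- find a vertex of W with no chips left
    have hx : ∃ x ∈ W, E x = 0 := by
      by_contra hx
      push_neg at hx
      have h1 : ∀ w ∈ W, 1 ≤ E w := by
        intro w hw
        have := hE0 w
        have := hx w hw
        omega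
      have h2 : (W.card : ℤ) ≤ ∑ w ∈ W, E w := by
        have := Finset.card_nsmul_le_sum W E 1 h1
        rwa [nsmul_eq_mul, mul_one] at this
      omega
    obtain ⟨x, hxW, hEx⟩ := hx
    -- serve x with the pointwise-maximal potential below the ceiling fm
    obtain ⟨g₀, hg₀⟩ := hserve x
    set memG : (G.V → ℤ) → Prop := fun g =>
      (∀ v, g v ≤ fm v) ∧ (∀ v, (if v = x then (1:ℤ) else 0) + G.laplacian g v ≤ D v) with hmemG
    obtain ⟨vc, -, hvc⟩ :=
      Finset.exists_max_image Finset.univ (fun v => g₀ v - fm v) ⟨v₀, Finset.mem_univ v₀⟩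
    set g₁ : G.V → ℤ := fun v => g₀ v - (g₀ vc - fm vc) with hg₁
    have hg₁G : memG g₁ := by
      constructor
      · intro v
        have := hvc v (Finset.mem_univ v)
        simp only [hg₁]
        omega
      · intro v
        rw [hg₁, lap_sub_const]
        exact hg₀ v
    -- closure of memG under pointwise max
    have hclos : ∀ g g', memG g → memG g' → memG (fun v => max (g v) (g' v)) := by
      intro g g' hg hg'
      constructor
      · intro v
        exact max_le (hg.1 v) (hg'.1 v)
      · intro v
        rcases le_total (g v) (g' v) with hle | hle
        · have htouch : (fun w => max (g w) (g' w)) v = g' v := max_eq_right hle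
          have h1 : G.laplacian (fun w => max (g w) (g' w)) v ≤ G.laplacian g' v :=
            lap_le_of_touch (fun u => le_max_right (g u) (g' u)) htouch
          have := hg'.2 v
          omega
        · have htouch : (fun w => max (g w) (g' w)) v = g v := max_eq_left hle
          have h1 : G.laplacian (fun w => max (g w) (g' w)) v ≤ G.laplacian g v :=
            lap_le_of_touch (fun u => le_max_left (g u) (g' u)) htouch
          have := hg.2 v
          omega
    -- sum-maximal element of memG above g₁
    have hbddG : ∃ b : ℤ, ∀ z : ℤ, (∃ g, (memG g ∧ ∀ v, g₁ v ≤ g v) ∧ ∑ v, g v = z) → z ≤ b := by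
      refine ⟨∑ v, fm v, ?_⟩
      rintro z ⟨g, ⟨hg, -⟩, rfl⟩
      exact Finset.sum_le_sum (fun v _ => hg.1 v)
    obtain ⟨s₂, ⟨gh, ⟨hghG, hghge⟩, hghsum⟩, hmax₂⟩ :=
      Int.exists_greatest_of_bdd hbddG ⟨∑ v, g₁ v, ⟨g₁, ⟨hg₁G, fun v => le_refl _⟩, rfl⟩⟩
    -- gh dominates every element of memG pointwise
    have hdom : ∀ g, memG g → ∀ v, g v ≤ gh v := by
      intro g hg v
      set h : G.V → ℤ := fun w => max (g w) (gh w) with hh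
      have hhG : memG h := hclos g gh hg hghG
      have hhge : ∀ w, g₁ w ≤ h w := fun w => le_trans (hghge w) (le_max_right _ _)
      have hsum : ∑ w, h w ≤ ∑ w, gh w := by
        rw [hghsum]
        exact hmax₂ _ ⟨h, ⟨hhG, hhge⟩, rfl⟩
      have hptwise : ∀ w, gh w ≤ h w := fun w => le_max_right _ _
      have hzero : ∑ w, (h w - gh w) = 0 := by
        have h1 : (0:ℤ) ≤ ∑ w, (h w - gh w) :=
          Finset.sum_nonneg (fun w _ => by have := hptwise w; omega)
        have h2 : ∑ w, (h w - gh w) = (∑ w, h w) - ∑ w, gh w := by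
          rw [Finset.sum_sub_distrib]
        omega
      have heq : ∀ w, h w - gh w = 0 := by
        intro w
        have := (Finset.sum_eq_zero_iff_of_nonneg
          (fun u (_ : u ∈ Finset.univ) => by have := hptwise u; omega : ∀ u ∈ Finset.univ, (0:ℤ) ≤ h u - gh u)).mp hzero w (Finset.mem_univ w)
        exact this
      have := heq v
      have : g v ≤ h v := le_max_left _ _
      have := heq v
      omega
    -- the contact set
    set B : Finset G.V := Finset.univ.filter (fun v => gh v = fm v) with hB
    have hBne : B.Nonempty := by
      by_contra hBe
      rw [Finset.not_nonempty_iff_eq_empty] at hBe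
      have hlt : ∀ v, gh v + 1 ≤ fm v := by
        intro v
        have h1 : gh v ≠ fm v := by
          intro hcontra
          have : v ∈ B := by
            rw [hB, Finset.mem_filter]
            exact ⟨Finset.mem_univ v, hcontra⟩
          rw [hBe] at this
          exact absurd this (Finset.notMem_empty v)
        have h2 := hghG.1 v
        omega
      have hG' : memG (fun v => gh v + 1) := by
        constructor
        · intro v; exact hlt v
        · intro v
          rw [lap_const_add]
          exact hghG.2 v
      have := hdom _ hG' x
      omega
    have hxB : x ∉ B := by
      intro hxB
      rw [hB, Finset.mem_filter] at hxB
      have htouch : gh x = fm x := hxB.2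
      have h1 : G.laplacian fm x ≤ G.laplacian gh x :=
        lap_le_of_touch (fun u => hghG.1 u) htouch.symm
      have h2 := hghG.2 x
      rw [if_pos rfl] at h2
      have h3 : G.laplacian fm x = D x := by
        have : E x = 0 := hEx
        simp only [hE] at this
        omega
      omega
    -- vertices of B can pay their edges leaving B
    have hBrich : ∀ v ∈ B, (∑ u ∈ Finset.univ \ B, (nE G v u : ℤ)) + G.laplacian fm v ≤ D v := by
      intro v hv
      rw [hB, Finset.mem_filter] at hv
      have hveq : gh v = fm v := hv.2
      have hkey : G.laplacian gh v - G.laplacian fm v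
          = ∑ u, (nE G v u : ℤ) * (fm u - gh u) := by
        rw [lap_apply, lap_apply, ← Finset.sum_sub_distrib]
        apply Finset.sum_congr rfl
        intro u _
        rw [hveq]
        ring
      have hlow : ∑ u ∈ Finset.univ \ B, (nE G v u : ℤ)
          ≤ ∑ u, (nE G v u : ℤ) * (fm u - gh u) := by
        have h1 : ∑ u ∈ Finset.univ \ B, (nE G v u : ℤ)
            ≤ ∑ u ∈ Finset.univ \ B, (nE G v u : ℤ) * (fm u - gh u) := by
          apply Finset.sum_le_sum
          intro u hu
          have hu' : u ∉ B := (Finset.mem_sdiff.mp hu).2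
          have h2 : gh u ≠ fm u := by
            intro hcontra
            exact hu' (by rw [hB, Finset.mem_filter]; exact ⟨Finset.mem_univ u, hcontra⟩)
          have h3 := hghG.1 u
          have h4 : (0:ℤ) ≤ fm u - gh u - 1 := by omega
          nlinarith [mul_nonneg (Nat.cast_nonneg (α := ℤ) (nE G v u)) h4]
        have h2 : ∑ u ∈ Finset.univ \ B, (nE G v u : ℤ) * (fm u - gh u)
            ≤ ∑ u, (nE G v u : ℤ) * (fm u - gh u) := by
          apply Finset.sum_le_sum_of_subset_of_nonneg (Finset.subset_univ _)
          intro u _ _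
          have := hghG.1 u
          exact mul_nonneg (by positivity) (by omega)
        omega
      have h4 := hghG.2 v
      have h5 : (0:ℤ) ≤ if v = x then (1:ℤ) else 0 := by positivity
      omega
    -- the fired potential
    set f' : G.V → ℤ := fun v => fm v + (if v ∈ B then (1:ℤ) else 0) with hf'
    have hf'valid : ∀ v, G.laplacian f' v ≤ D v := by
      intro v
      have hsplit : G.laplacian f' v = G.laplacian fm v
          + G.laplacian (fun w => if w ∈ B then (1:ℤ) else 0) v := by
        rw [hf', lap_add]
      by_cases hv : v ∈ B
      · rw [hsplit, lap_ind_mem B hv]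
        have := hBrich v hv
        omega
      · rw [hsplit]
        have h1 := lap_ind_not_mem B hv
        have h2 := hfmS.1 v
        omega
    by_cases hBW : (W ∩ B).Nonempty
    · -- the argmin set shrinks: contradiction with minimality of a
      obtain ⟨b, hbWB⟩ := hBW
      rw [Finset.mem_inter] at hbWB
      have hxWB : x ∈ W \ B := Finset.mem_sdiff.mpr ⟨hxW, hxB⟩
      have hf'0 : ∀ v, 0 ≤ f' v := by
        intro v
        have h1 := hSnonneg fm hfmS v
        have h2 : (0:ℤ) ≤ if v ∈ B then (1:ℤ) else 0 := by positivity
        simp only [hf']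
        omega
      have hf'W : ∀ w ∈ W \ B, f' w = 0 := by
        intro w hw
        rw [Finset.mem_sdiff] at hw
        simp only [hf', if_neg hw.2, hfmS.2.1 w hw.1, add_zero]
      have hf'pos : ∀ v, v ∉ W \ B → 1 ≤ f' v := by
        intro v hv
        rw [Finset.mem_sdiff] at hv
        push_neg at hv
        by_cases hvB : v ∈ B
        · have := hSnonneg fm hfmS v
          simp only [hf', if_pos hvB]
          omega
        · have hvW : v ∉ W := fun h => hvB (hv h)
          have := hfmS.2.2 v hvW
          simp only [hf', if_neg hvB]
          omega
      have hWf' : Wof f' = W \ B := by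
        ext v
        rw [memWof]
        constructor
        · intro h
          by_contra hv
          have h1 := hf'pos v hv
          have h2 := h x
          rw [hf'W x hxWB] at h2
          omega
        · intro hv u
          rw [hf'W v hv]
          exact hf'0 u
      have hsubk : (Wof f').card ∈ A := by
        refine ⟨f', hf'valid, ?_, rfl⟩
        rw [hWf']
        intro hcontra
        have : b ∈ W \ B := hcontra ▸ Finset.mem_univ b
        rw [Finset.mem_sdiff] at this
        exact this.2 hbWB.2
      have hlt : (Wof f').card < a := by
        rw [hWf', ha, ← hf₂card]
        apply Finset.card_lt_card
        constructor
        · exact Finset.sdiff_subset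
        · intro hcontra
          have : b ∈ W \ B := hcontra hbWB.1
          rw [Finset.mem_sdiff] at this
          exact this.2 hbWB.2
      have := Nat.sInf_le hsubk
      rw [← ha] at this
      omega
    · -- no shrink: the sum grows, contradicting maximality
      rw [Finset.not_nonempty_iff_eq_empty] at hBW
      have hBnotW : ∀ v ∈ B, v ∉ W := by
        intro v hv hvW
        have : v ∈ W ∩ B := Finset.mem_inter.mpr ⟨hvW, hv⟩
        rw [hBW] at this
        exact absurd this (Finset.notMem_empty v)
      have hf'S : memS f' := by
        refine ⟨hf'valid, ?_, ?_⟩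
        · intro w hw
          have hwB : w ∉ B := fun h => hBnotW w h hw
          simp only [hf', if_neg hwB, hfmS.2.1 w hw, add_zero]
        · intro v hv
          have h1 := hfmS.2.2 v hv
          have h2 : (0:ℤ) ≤ if v ∈ B then (1:ℤ) else 0 := by positivity
          simp only [hf']
          omega
      have hsum' : ∑ v, f' v = (∑ v, fm v) + (B.card : ℤ) := by
        simp only [hf']
        rw [Finset.sum_add_distrib]
        congr 1
        rw [Finset.sum_ite_mem, Finset.univ_inter, Finset.sum_const, nsmul_eq_mul, mul_one]
      have h1 : ∑ v, f' v ≤ s₁ := hmax _ ⟨f', hf'S, rfl⟩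
      have h2 : 1 ≤ B.card := Finset.card_pos.mpr hBne
      have h3 : (1:ℤ) ≤ (B.card : ℤ) := by exact_mod_cast h2
      omega

end Stmt7Aux
namespace Stmt7Aux

open Finset

variable {G : Multigraph}

lemma degree_sub (D D' : G.Divisor) : G.degree (D - D') = G.degree D - G.degree D' := by
  simp only [Multigraph.degree, Pi.sub_apply]
  rw [Finset.sum_sub_distrib]

lemma linEquiv_degree {D D' : G.Divisor} (h : G.LinEquiv D D') : G.degree D = G.degree D' := by
  obtain ⟨f, hf⟩ := h
  have h1 : G.degree (D - D') = 0 := by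
    rw [hf]
    exact lap_sum f
  have h2 := degree_sub D D'
  omega

lemma degree_point (v₀ : G.V) (r : ℤ) :
    G.degree (fun v => if v = v₀ then r else 0) = r := by
  rw [Multigraph.degree]
  simp

lemma rank_bdd (D : G.Divisor) (hD : G.Effective D) (v₀ : G.V) :
    ∀ r ∈ {r : ℤ | r = -1 ∨ (0 ≤ r ∧ G.RankGe D r)}, r ≤ G.degree D := by
  intro r hr
  have hdeg0 : 0 ≤ G.degree D := Finset.sum_nonneg (fun v _ => hD v)
  rcases hr with rfl | ⟨hr0, hrge⟩
  · omega
  by_contra hcontra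
  push_neg at hcontra
  set F : G.Divisor := fun v => if v = v₀ then r else 0 with hF
  have hFeff : G.Effective F := by
    intro v
    by_cases hv : v = v₀ <;> simp [hF, hv, hr0]
  have hFdeg : G.degree F = r := degree_point v₀ r
  obtain ⟨E', hE'eff, hE'equiv⟩ := hrge F hFeff hFdeg
  have h1 : G.degree (D - F) = G.degree E' := linEquiv_degree hE'equiv
  have h2 : G.degree (D - F) = G.degree D - r := by rw [degree_sub, hFdeg]
  have h3 : 0 ≤ G.degree E' := Finset.sum_nonneg (fun v _ => hE'eff v)
  omega

lemma serve_of_rank (D : G.Divisor) (hD : G.Effective D) (v₀ : G.V)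
    (hrank : 1 ≤ G.rank D) :
    ∀ q : G.V, ∃ f : G.V → ℤ, ∀ v, (if v = q then (1:ℤ) else 0) + G.laplacian f v ≤ D v := by
  classical
  set S : Set ℤ := {r : ℤ | r = -1 ∨ (0 ≤ r ∧ G.RankGe D r)} with hS
  have hSne : (-1 : ℤ) ∈ S := Or.inl rfl
  have hSbdd := rank_bdd D hD v₀
  obtain ⟨b, hbS, hbub⟩ := Int.exists_greatest_of_bdd ⟨G.degree D, hSbdd⟩ ⟨-1, hSne⟩
  have hsup : sSup S = b := IsGreatest.csSup_eq ⟨hbS, hbub⟩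
  have hb1 : 1 ≤ b := by
    have : G.rank D = sSup S := rfl
    rw [this, hsup] at hrank
    exact hrank
  have hbRank : G.RankGe D b := by
    rcases hbS with h | h
    · omega
    · exact h.2
  intro q
  set F : G.Divisor := fun v => if v = q then b else 0 with hF
  have hFeff : G.Effective F := by
    intro v
    by_cases hv : v = q <;> simp [hF, hv]
    omega
  have hFdeg : G.degree F = b := degree_point q b
  obtain ⟨E', hE'eff, f, hf⟩ := hbRank F hFeff hFdeg
  refine ⟨f, fun v => ?_⟩
  have h1 : D v - F v - E' v = G.laplacian f v := by
    have := congrFun hf v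
    simpa using this
  have h2 := hE'eff v
  by_cases hv : v = q
  · simp only [if_pos hv]
    have h3 : F v = b := by simp [hF, hv]
    omega
  · simp only [if_neg hv]
    have h3 : F v = 0 := by simp [hF, hv]
    omega

lemma gonality_set_nonempty (G : Multigraph) (hne : Nonempty G.V) :
    ∃ n : ℕ, ∃ D : G.Divisor, G.Effective D ∧ G.degree D = (n : ℤ) ∧ 1 ≤ G.rank D := by
  classical
  obtain ⟨v₀⟩ := hne
  set D : G.Divisor := fun _ => 1 with hD
  have hDeff : G.Effective D := fun v => by simp [hD]
  have hDdeg : G.degree D = (Fintype.card G.V : ℤ) := by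
    simp [hD, Multigraph.degree]
  refine ⟨Fintype.card G.V, D, hDeff, hDdeg, ?_⟩
  have hrge : G.RankGe D 1 := by
    intro F hFeff hFdeg
    refine ⟨D - F, ?_, 0, ?_⟩
    · intro v
      have h1 : F v ≤ 1 := by
        have h2 : F v ≤ G.degree F :=
          Finset.single_le_sum (fun u (_ : u ∈ Finset.univ) => hFeff u) (Finset.mem_univ v)
        omega
      simp only [Pi.sub_apply, hD]
      omega
    · funext v
      simp only [Pi.sub_apply, Pi.zero_apply, sub_self]
      rw [Multigraph.laplacian]
      apply (Finset.sum_eq_zero _).symm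
      intro w _
      simp
  have h1 : (1 : ℤ) ∈ {r : ℤ | r = -1 ∨ (0 ≤ r ∧ G.RankGe D r)} := Or.inr ⟨by omega, hrge⟩
  have hbdd : BddAbove {r : ℤ | r = -1 ∨ (0 ≤ r ∧ G.RankGe D r)} :=
    ⟨G.degree D, fun r hr => rank_bdd D hDeff v₀ r hr⟩
  exact le_csSup hbdd h1

end Stmt7Aux

/-- For a simple graph `G`, `gon(G) ≥ min {val(v) : v ∈ V(G)}`. -/
theorem stmt_7 (G : Multigraph) (hG : G.Connected) (hs : G.Simple) :
    sInf (Set.range G.valence) ≤ G.gonality := by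
  classical
  obtain ⟨v₀⟩ := hG.1
  set N : Set ℕ := {n : ℕ | ∃ D : G.Divisor, G.Effective D ∧ G.degree D = (n : ℤ) ∧ 1 ≤ G.rank D}
    with hN
  have hNne : N.Nonempty := Stmt7Aux.gonality_set_nonempty G hG.1
  have hgon : G.gonality ∈ N := Nat.sInf_mem hNne
  obtain ⟨D, hDeff, hDdeg, hDrank⟩ := hgon
  have hserve := Stmt7Aux.serve_of_rank D hDeff v₀ hDrank
  obtain ⟨v, hv⟩ := Stmt7Aux.key G hG hs D hDeff hserve
  have h1 : sInf (Set.range G.valence) ≤ G.valence v := Nat.sInf_le ⟨v, rfl⟩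
  have h2 : G.valence v ≤ G.gonality := by
    rw [hDdeg] at hv
    exact_mod_cast hv
  omega
end

section
/- Let G be a graph and let G′ be the graph obtained from G by contracting every bridge of G. Then gon(G) = 3 if and only if gon(G′) = 3. -/
section Stmt9Aux

open Finset

namespace Stmt9

variable (G : Multigraph)

/-- Indicator divisor of a vertex. -/
def delta (u : G.V) : G.Divisor := fun w => if w = u then 1 else 0

lemma ends_exists (e : G.E) : ∃ a b, G.ends e = s(a, b) :=
  Sym2.ind (f := fun p => p = G.ends e → ∃ a b, G.ends e = s(a, b))
    (fun x y h => ⟨x, y, h.symm⟩) (G.ends e) rfl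

lemma ends_ne {e : G.E} {a b : G.V} (h : G.ends e = s(a, b)) : a ≠ b := by
  intro hab
  exact G.loopless e (by rw [h, hab]; exact Sym2.mk_isDiag_iff.mpr rfl)

/-- The contribution of an edge to the Laplacian at `v`. -/
noncomputable def eTerm (f : G.V → ℤ) (v : G.V) (e : G.E) : ℤ :=
  Sym2.lift ⟨fun x y => (if v = x then f x - f y else 0) + (if v = y then f y - f x else 0),
    fun x y => add_comm _ _⟩ (G.ends e)

lemma eTerm_eval {e : G.E} {a b : G.V} (h : G.ends e = s(a, b)) (f : G.V → ℤ) (v : G.V) :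
    eTerm G f v e = (if v = a then f a - f b else 0) + (if v = b then f b - f a else 0) := by
  rw [eTerm, h, Sym2.lift_mk]

lemma numEdges_cast (u w : G.V) :
    (G.numEdges u w : ℤ) = ∑ e : G.E, (if G.ends e = s(u, w) then 1 else 0) := by
  classical
  have : {e : G.E | G.ends e = s(u, w)} = ↑(univ.filter (fun e => G.ends e = s(u, w))) := by
    ext e; simp
  rw [Multigraph.numEdges, this, Set.ncard_coe_finset, Finset.card_filter]
  push_cast
  simp

lemma lap_eq_sum (f : G.V → ℤ) (v : G.V) :
    G.laplacian f v = ∑ e : G.E, eTerm G f v e := by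
  classical
  unfold Multigraph.laplacian
  have h1 : ∀ w : G.V, (G.numEdges v w : ℤ) * (f v - f w)
      = ∑ e : G.E, (if G.ends e = s(v, w) then f v - f w else 0) := by
    intro w
    rw [numEdges_cast, Finset.sum_mul]
    refine Finset.sum_congr rfl fun e _ => ?_
    by_cases h : G.ends e = s(v, w) <;> simp [h]
  rw [Finset.sum_congr rfl (fun w _ => h1 w), Finset.sum_comm]
  refine Finset.sum_congr rfl fun e _ => ?_
  obtain ⟨a, b, hab⟩ := ends_exists G e
  have hne : a ≠ b := ends_ne G hab
  rw [eTerm_eval G hab]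
  have hcond : ∀ w : G.V, (G.ends e = s(v, w)) ↔ ((v = a ∧ w = b) ∨ (v = b ∧ w = a)) := by
    intro w
    rw [hab, Sym2.eq_iff]
    constructor
    · rintro (⟨h1, h2⟩ | ⟨h1, h2⟩)
      · exact Or.inl ⟨h1.symm, h2.symm⟩
      · exact Or.inr ⟨h2.symm, h1.symm⟩
    · rintro (⟨h1, h2⟩ | ⟨h1, h2⟩)
      · exact Or.inl ⟨h1.symm, h2.symm⟩
      · exact Or.inr ⟨h2.symm, h1.symm⟩
  rw [Finset.sum_congr rfl (fun w _ => if_congr (hcond w) rfl rfl)]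
  by_cases hva : v = a
  · subst hva
    have hvb : v ≠ b := hne
    have h2 : ∀ w : G.V, ((v = v ∧ w = b) ∨ (v = b ∧ w = v)) ↔ w = b := by
      intro w; constructor
      · rintro (⟨_, h⟩ | ⟨h, _⟩); exact h; exact absurd h hvb
      · intro h; exact Or.inl ⟨rfl, h⟩
    rw [Finset.sum_congr rfl (fun w _ => if_congr (h2 w) rfl rfl),
      Finset.sum_ite_eq' univ b (fun w => f v - f w), if_pos (mem_univ b), if_pos rfl,
      if_neg hvb, add_zero]
  · by_cases hvb : v = b
    · subst hvb
      have h2 : ∀ w : G.V, ((v = a ∧ w = v) ∨ (v = v ∧ w = a)) ↔ w = a := by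
        intro w; constructor
        · rintro (⟨h, _⟩ | ⟨_, h⟩); exact absurd h hva; exact h
        · intro h; exact Or.inr ⟨rfl, h⟩
      rw [Finset.sum_congr rfl (fun w _ => if_congr (h2 w) rfl rfl),
        Finset.sum_ite_eq' univ a (fun w => f v - f w), if_pos (mem_univ a), if_pos rfl,
        if_neg hva, zero_add]
    · rw [if_neg hva, if_neg hvb, add_zero]
      refine Finset.sum_eq_zero fun w _ => ?_
      rw [if_neg]
      rintro (⟨h, _⟩ | ⟨h, _⟩); exact hva h; exact hvb h

lemma lap_add (f g : G.V → ℤ) :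
    G.laplacian (f + g) = G.laplacian f + G.laplacian g := by
  funext v
  show G.laplacian (f + g) v = G.laplacian f v + G.laplacian g v
  unfold Multigraph.laplacian
  rw [← Finset.sum_add_distrib]
  refine Finset.sum_congr rfl fun w _ => ?_
  simp only [Pi.add_apply]; ring

/-- The Laplacian as an additive group hom. -/
noncomputable def lapHom : (G.V → ℤ) →+ (G.V → ℤ) :=
  AddMonoidHom.mk' G.laplacian (lap_add G)

lemma lap_smul (c : ℤ) (f : G.V → ℤ) :
    G.laplacian (c • f) = c • G.laplacian f :=
  map_zsmul (lapHom G) c f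

/-- Principal divisors. -/
def Prin (D : G.Divisor) : Prop := ∃ f : G.V → ℤ, D = G.laplacian f

lemma prin_zero : Prin G 0 := ⟨0, (map_zero (lapHom G)).symm⟩

lemma prin_add {D D' : G.Divisor} (h : Prin G D) (h' : Prin G D') : Prin G (D + D') := by
  obtain ⟨f, rfl⟩ := h; obtain ⟨g, rfl⟩ := h'
  exact ⟨f + g, (lap_add G f g).symm⟩

lemma prin_neg {D : G.Divisor} (h : Prin G D) : Prin G (-D) := by
  obtain ⟨f, rfl⟩ := h
  exact ⟨-f, (map_neg (lapHom G) f).symm⟩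

lemma prin_sub {D D' : G.Divisor} (h : Prin G D) (h' : Prin G D') : Prin G (D - D') := by
  rw [sub_eq_add_neg]; exact prin_add G h (prin_neg G h')

lemma prin_smul (c : ℤ) {D : G.Divisor} (h : Prin G D) : Prin G (c • D) := by
  obtain ⟨f, rfl⟩ := h
  exact ⟨c • f, (lap_smul G c f).symm⟩

lemma prin_sum {ι : Type*} (s : Finset ι) (F : ι → G.Divisor)
    (h : ∀ i ∈ s, Prin G (F i)) : Prin G (∑ i ∈ s, F i) := by
  classical
  induction s using Finset.induction_on with
  | empty => simpa using prin_zero G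
  | insert _ _ hx ih =>
    rw [Finset.sum_insert hx]
    exact prin_add G (h _ (Finset.mem_insert_self _ _))
      (ih fun i hi => h i (Finset.mem_insert_of_mem hi))

lemma degree_lap (f : G.V → ℤ) : G.degree (G.laplacian f) = 0 := by
  unfold Multigraph.degree
  rw [Finset.sum_congr rfl (fun v _ => lap_eq_sum G f v), Finset.sum_comm]
  refine Finset.sum_eq_zero fun e _ => ?_
  obtain ⟨a, b, hab⟩ := ends_exists G e
  rw [Finset.sum_congr rfl (fun v _ => eTerm_eval G hab f v), Finset.sum_add_distrib,
    Finset.sum_ite_eq' univ a (fun _ => f a - f b),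
    Finset.sum_ite_eq' univ b (fun _ => f b - f a),
    if_pos (mem_univ a), if_pos (mem_univ b)]
  ring

lemma degree_add (D D' : G.Divisor) : G.degree (D + D') = G.degree D + G.degree D' := by
  unfold Multigraph.degree; rw [← Finset.sum_add_distrib]; rfl

lemma degree_sub (D D' : G.Divisor) : G.degree (D - D') = G.degree D - G.degree D' := by
  unfold Multigraph.degree; rw [← Finset.sum_sub_distrib]; rfl

lemma degree_smul (c : ℤ) (D : G.Divisor) : G.degree (c • D) = c * G.degree D := by
  unfold Multigraph.degree; rw [Finset.mul_sum]; rfl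

lemma degree_delta (u : G.V) : G.degree (delta G u) = 1 := by
  unfold Multigraph.degree delta
  rw [Finset.sum_ite_eq' univ u (fun _ => (1:ℤ)), if_pos (mem_univ u)]

lemma degree_nonneg {D : G.Divisor} (h : G.Effective D) : 0 ≤ G.degree D :=
  Finset.sum_nonneg fun v _ => h v

/-- From a bridge we obtain a 0/1 cut function whose only crossing edge is the bridge. -/
lemma bridge_cut (hG : G.Connected) {e : G.E} (he : G.IsBridge e) :
    ∃ χ : G.V → ℤ, (∀ v, χ v = 0 ∨ χ v = 1) ∧
      (∀ e₂, e₂ ≠ e → ∀ x y, G.ends e₂ = s(x, y) → χ x = χ y) ∧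
      (∃ u v, G.ends e = s(u, v) ∧ χ u = 1 ∧ χ v = 0) := by
  classical
  obtain ⟨hV, hconn⟩ := hG
  rw [Multigraph.IsBridge, Multigraph.ConnectedWithout, not_and] at he
  have hA := he hV
  push_neg at hA
  obtain ⟨A, hAne, hAuniv, hA⟩ := hA
  refine ⟨fun v => if v ∈ A then 1 else 0, fun v => by by_cases h : v ∈ A <;> simp [h], ?_, ?_⟩
  · intro e₂ he₂ x y hxy
    have h2 : x ∈ A → y ∈ A := hA e₂ (by simp [he₂]) x y hxy
    have h3 : y ∈ A → x ∈ A := hA e₂ (by simp [he₂]) y x (by rw [hxy, Sym2.eq_swap])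
    by_cases hx : x ∈ A <;> by_cases hy : y ∈ A <;> simp [hx, hy] <;> tauto
  · obtain ⟨e₂, -, u, v, huv, hu, hv⟩ := hconn A hAne hAuniv
    have he₂ : e₂ = e := by
      by_contra hne
      exact hv (hA e₂ (by simp [hne]) u v huv hu)
    subst he₂
    exact ⟨u, v, huv, if_pos hu, if_neg hv⟩

/-- The firing function of a bridge. -/
lemma bridge_fire (hG : G.Connected) {e : G.E} (he : G.IsBridge e) :
    ∃ (χ : G.V → ℤ) (u v : G.V), G.ends e = s(u, v) ∧ χ u = 1 ∧ χ v = 0 ∧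
      (∀ e₂, e₂ ≠ e → ∀ x y, G.ends e₂ = s(x, y) → χ x = χ y) ∧
      G.laplacian χ = delta G u - delta G v := by
  classical
  obtain ⟨χ, h01, hsame, u, v, huv, hu, hv⟩ := bridge_cut G hG he
  refine ⟨χ, u, v, huv, hu, hv, hsame, ?_⟩
  funext w
  rw [lap_eq_sum]
  rw [Finset.sum_eq_single e (fun e₂ _ hne => ?_) (fun h => absurd (mem_univ e) h)]
  · have hne := ends_ne G huv
    rw [eTerm_eval G huv, hu, hv]
    show _ = delta G u w - delta G v w
    unfold delta
    by_cases h1 : w = u <;> by_cases h2 : w = v <;>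
      simp [h1, h2, hne] at * <;> omega
  · obtain ⟨a, b, hab⟩ := ends_exists G e₂
    rw [eTerm_eval G hab, hsame e₂ hne a b hab]
    simp

lemma eff_add {D D' : G.Divisor} (h : G.Effective D) (h' : G.Effective D') :
    G.Effective (D + D') := fun v => add_nonneg (h v) (h' v)

lemma eff_smul_delta {c : ℤ} (hc : 0 ≤ c) (u : G.V) : G.Effective (c • delta G u) := by
  intro v
  simp only [Pi.smul_apply, delta, smul_eq_mul]
  by_cases h : v = u <;> simp [h, hc]

lemma rankGe_mono (hV : Nonempty G.V) {D : G.Divisor} {r k : ℤ}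
    (h : G.RankGe D r) (h0 : 0 ≤ k) (hk : k ≤ r) : G.RankGe D k := by
  intro F hF hdeg
  obtain ⟨v₀⟩ := hV
  have hrk : (0:ℤ) ≤ r - k := by omega
  obtain ⟨E, hE, f, hf⟩ := h (F + (r - k) • delta G v₀)
    (eff_add G hF (eff_smul_delta G hrk v₀))
    (by rw [degree_add, hdeg, degree_smul, degree_delta]; ring)
  refine ⟨E + (r - k) • delta G v₀, eff_add G hE (eff_smul_delta G hrk v₀), f, ?_⟩
  rw [← hf]
  abel

lemma rankGe_le_deg (hV : Nonempty G.V) {D : G.Divisor} {r : ℤ}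
    (h0 : 0 ≤ r) (h : G.RankGe D r) : r ≤ G.degree D := by
  obtain ⟨v₀⟩ := hV
  obtain ⟨E, hE, f, hf⟩ := h (r • delta G v₀) (eff_smul_delta G h0 v₀)
    (by rw [degree_smul, degree_delta]; ring)
  have hdeg := congrArg G.degree hf
  rw [degree_lap, degree_sub, degree_sub, degree_smul, degree_delta] at hdeg
  have := degree_nonneg G hE
  omega

lemma rank_ge_one_iff (hV : Nonempty G.V) (D : G.Divisor) :
    1 ≤ G.rank D ↔ G.RankGe D 1 := by
  have hbdd : BddAbove {r : ℤ | r = -1 ∨ (0 ≤ r ∧ G.RankGe D r)} := by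
    refine ⟨max (G.degree D) (-1), fun r hr => ?_⟩
    rcases hr with rfl | ⟨h0, h⟩
    · exact le_max_right _ _
    · exact le_trans (rankGe_le_deg G hV h0 h) (le_max_left _ _)
  constructor
  · intro h
    have hmem : G.rank D ∈ {r : ℤ | r = -1 ∨ (0 ≤ r ∧ G.RankGe D r)} :=
      Int.csSup_mem ⟨-1, Or.inl rfl⟩ hbdd
    rcases hmem with heq | ⟨h0, hr⟩
    · omega
    · exact rankGe_mono G hV hr zero_le_one h
  · intro h
    exact le_csSup hbdd (Or.inr ⟨zero_le_one, h⟩)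

variable (G' : Multigraph) (π : G.V → G'.V)

/-- Pushforward of divisors along `π`. -/
noncomputable def push (D : G.Divisor) : G'.Divisor :=
  fun v' => ∑ v ∈ univ.filter (fun v => π v = v'), D v

lemma push_add' (D D' : G.Divisor) :
    push G G' π (D + D') = push G G' π D + push G G' π D' := by
  funext v'
  simp [push, Finset.sum_add_distrib]

/-- Pushforward as an additive hom. -/
noncomputable def pushHom : (G.V → ℤ) →+ (G'.V → ℤ) :=
  AddMonoidHom.mk' (push G G' π) (push_add' G G' π)

lemma push_sub (A B : G.Divisor) :
    push G G' π (A - B) = push G G' π A - push G G' π B :=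
  map_sub (pushHom G G' π) A B

lemma push_degree (D : G.Divisor) : G'.degree (push G G' π D) = G.degree D := by
  unfold Multigraph.degree push
  exact Finset.sum_fiberwise univ π D

lemma push_eff {D : G.Divisor} (hD : G.Effective D) : G'.Effective (push G G' π D) :=
  fun v' => Finset.sum_nonneg fun v _ => hD v

lemma push_delta (u : G.V) : push G G' π (delta G u) = delta G' (π u) := by
  funext v'
  unfold push delta
  rw [Finset.sum_ite_eq' _ u (fun _ => (1:ℤ))]
  simp [eq_comm]

variable (σ : G'.V → G.V)

/-- Pullback of divisors along a section `σ` of `π`. -/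
noncomputable def pull (D' : G'.Divisor) : G.Divisor :=
  fun v => if σ (π v) = v then D' (π v) else 0

lemma pull_eff {D' : G'.Divisor} (hD' : G'.Effective D') : G.Effective (pull G G' π σ D') := by
  intro v
  unfold pull
  split_ifs
  · exact hD' _
  · exact le_refl 0

lemma push_pull (hσ : ∀ v', π (σ v') = v') (D' : G'.Divisor) :
    push G G' π (pull G G' π σ D') = D' := by
  funext v'
  unfold push pull
  rw [Finset.sum_congr rfl (fun v hv => by rw [(Finset.mem_filter.mp hv).2])]
  rw [Finset.sum_ite_eq _ (σ v') (fun _ => D' v'), if_pos (by simp [hσ])]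

lemma pull_degree (hσ : ∀ v', π (σ v') = v') (D' : G'.Divisor) :
    G.degree (pull G G' π σ D') = G'.degree D' := by
  rw [← push_degree G G' π, push_pull G G' π σ hσ]

lemma fiber_prin (hG : G.Connected)
    (hπ : ∀ u v : G.V, π u = π v ↔
      Relation.EqvGen (fun a b => ∃ e, G.IsBridge e ∧ G.ends e = s(a, b)) u v)
    {u v : G.V} (h : π u = π v) : Prin G (delta G u - delta G v) := by
  have h' := (hπ u v).mp h
  clear h
  induction h' with
  | rel a b hab =>
      obtain ⟨e, he, hab⟩ := hab
      obtain ⟨χ, u₀, v₀, h0, hu0, hv0, -, hlap⟩ := bridge_fire G hG he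
      rcases Sym2.eq_iff.mp (h0.symm.trans hab) with ⟨h1, h2⟩ | ⟨h1, h2⟩
      · exact ⟨χ, by rw [← h1, ← h2, hlap]⟩
      · refine ⟨-χ, ?_⟩
        have hneg : G.laplacian (-χ) = -(G.laplacian χ) := map_neg (lapHom G) χ
        rw [hneg, hlap, ← h1, ← h2, neg_sub]
  | refl a => rw [sub_self]; exact prin_zero G
  | symm a b _ ih =>
      have := prin_neg G ih
      rwa [neg_sub] at this
  | trans a b c _ _ ih1 ih2 =>
      have := prin_add G ih1 ih2
      rwa [sub_add_sub_cancel] at this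

lemma push_zero_prin (hG : G.Connected)
    (hπ : ∀ u v : G.V, π u = π v ↔
      Relation.EqvGen (fun a b => ∃ e, G.IsBridge e ∧ G.ends e = s(a, b)) u v)
    (hσ : ∀ v', π (σ v') = v') {X : G.Divisor}
    (hX : push G G' π X = 0) : Prin G X := by
  classical
  have hXeq : X = ∑ v : G.V, X v • (delta G v - delta G (σ (π v))) := by
    funext w
    rw [Finset.sum_apply]
    have hterm : ∀ v : G.V, (X v • (delta G v - delta G (σ (π v)))) w
        = (if w = v then X v else 0) - (if σ (π v) = w then X v else 0) := by
      intro v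
      simp only [Pi.smul_apply, Pi.sub_apply, smul_eq_mul, delta]
      rw [mul_sub]
      congr 1
      · by_cases h : w = v <;> simp [h, eq_comm]
      · by_cases h : w = σ (π v) <;> simp [h, eq_comm]
    rw [Finset.sum_congr rfl (fun v _ => hterm v), Finset.sum_sub_distrib,
      Finset.sum_ite_eq univ w X, if_pos (mem_univ w)]
    have h2 : ∑ v : G.V, (if σ (π v) = w then X v else 0) = 0 := by
      rw [← Finset.sum_fiberwise univ π (fun v => if σ (π v) = w then X v else 0)]
      refine Finset.sum_eq_zero fun j _ => ?_
      rw [Finset.sum_congr rfl (fun v hv => by rw [(Finset.mem_filter.mp hv).2])]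
      by_cases hc : σ j = w
      · rw [Finset.sum_congr rfl (fun v _ => if_pos hc)]
        exact congrFun hX j
      · rw [Finset.sum_congr rfl (fun v _ => if_neg hc), Finset.sum_const, smul_zero]
    rw [h2, sub_zero]
  rw [hXeq]
  exact prin_sum G _ _ fun v _ =>
    prin_smul G _ (fiber_prin G G' π hG hπ (hσ (π v)).symm)


variable (ι : G'.E → G.E)

lemma push_lap_comp
    (hπ : ∀ u v : G.V, π u = π v ↔
      Relation.EqvGen (fun a b => ∃ e, G.IsBridge e ∧ G.ends e = s(a, b)) u v)
    (hιinj : Function.Injective ι)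
    (hιrange : ∀ e : G.E, (∃ e', ι e' = e) ↔ ¬ G.IsBridge e)
    (hends : ∀ e' : G'.E, G'.ends e' = Sym2.map π (G.ends (ι e')))
    (g : G'.V → ℤ) :
    push G G' π (G.laplacian (g ∘ π)) = G'.laplacian g := by
  classical
  funext v'
  show (∑ v ∈ univ.filter (fun v => π v = v'), G.laplacian (g ∘ π) v) = _
  rw [Finset.sum_congr rfl (fun v _ => lap_eq_sum G _ v), Finset.sum_comm]
  have hT : ∀ (e : G.E) (a b : G.V), G.ends e = s(a, b) →
      (∑ v ∈ univ.filter (fun v => π v = v'), eTerm G (g ∘ π) v e)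
        = (if π a = v' then g (π a) - g (π b) else 0)
          + (if π b = v' then g (π b) - g (π a) else 0) := by
    intro e a b hab
    rw [Finset.sum_congr rfl (fun v _ => eTerm_eval G hab _ v), Finset.sum_add_distrib,
      Finset.sum_ite_eq' _ a (fun _ => (g ∘ π) a - (g ∘ π) b),
      Finset.sum_ite_eq' _ b (fun _ => (g ∘ π) b - (g ∘ π) a)]
    simp [Finset.mem_filter]
  have hbridge0 : ∀ e ∈ univ.filter (fun e => G.IsBridge e),
      (∑ v ∈ univ.filter (fun v => π v = v'), eTerm G (g ∘ π) v e) = 0 := by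
    intro e he
    obtain ⟨a, b, hab⟩ := ends_exists G e
    have hpab : π a = π b := (hπ a b).mpr
      (Relation.EqvGen.rel a b ⟨e, (Finset.mem_filter.mp he).2, hab⟩)
    rw [hT e a b hab, hpab]
    split_ifs <;> ring
  have hsplit := Finset.sum_filter_add_sum_filter_not univ (fun e => G.IsBridge e)
    (fun e => ∑ v ∈ univ.filter (fun v => π v = v'), eTerm G (g ∘ π) v e)
  rw [← hsplit, Finset.sum_eq_zero hbridge0, zero_add]
  have himg : univ.filter (fun e => ¬ G.IsBridge e) = univ.image ι := by
    ext e
    simp only [Finset.mem_filter, Finset.mem_image, Finset.mem_univ, true_and]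
    rw [← hιrange e]
  rw [himg, Finset.sum_image (fun x _ y _ h => hιinj h)]
  rw [lap_eq_sum G' g v']
  refine Finset.sum_congr rfl fun e' _ => ?_
  obtain ⟨a, b, hab⟩ := ends_exists G (ι e')
  have hends' : G'.ends e' = s(π a, π b) := by rw [hends e', hab, Sym2.map_pair_eq]
  rw [hT (ι e') a b hab, eTerm_eval G' hends' g v']
  congr 1
  · exact if_congr eq_comm rfl rfl
  · exact if_congr eq_comm rfl rfl

lemma push_prin (hG : G.Connected)
    (hπ : ∀ u v : G.V, π u = π v ↔
      Relation.EqvGen (fun a b => ∃ e, G.IsBridge e ∧ G.ends e = s(a, b)) u v)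
    (hιinj : Function.Injective ι)
    (hιrange : ∀ e : G.E, (∃ e', ι e' = e) ↔ ¬ G.IsBridge e)
    (hends : ∀ e' : G'.E, G'.ends e' = Sym2.map π (G.ends (ι e')))
    (hσ : ∀ v', π (σ v') = v')
    (f : G.V → ℤ) : Prin G' (push G G' π (G.laplacian f)) := by
  classical
  have hV : Nonempty G.V := hG.1
  obtain ⟨w₀⟩ := hV
  set Br : Finset G.E := univ.filter (fun e => G.IsBridge e) with hBr
  have H : ∀ e : G.E, ∃ (χ : G.V → ℤ) (u v : G.V), G.IsBridge e →
      G.ends e = s(u, v) ∧ χ u = 1 ∧ χ v = 0 ∧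
      (∀ e₂, e₂ ≠ e → ∀ x y, G.ends e₂ = s(x, y) → χ x = χ y) ∧
      G.laplacian χ = delta G u - delta G v := by
    intro e
    by_cases he : G.IsBridge e
    · obtain ⟨χ, u, v, h1, h2, h3, h4, h5⟩ := bridge_fire G hG he
      exact ⟨χ, u, v, fun _ => ⟨h1, h2, h3, h4, h5⟩⟩
    · exact ⟨0, w₀, w₀, fun h => absurd h he⟩
  choose χ uu vv hbr using H
  set f' : G.V → ℤ := fun w => f w - ∑ e ∈ Br, (f (uu e) - f (vv e)) * χ e w with hf'
  -- f' is constant on fibers of π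
  have hfib : ∀ a b : G.V, π a = π b → f' a = f' b := by
    intro a b h
    have h' := (hπ a b).mp h
    clear h
    induction h' with
    | rel a b hab =>
        obtain ⟨e, he, hab⟩ := hab
        have heBr : e ∈ Br := Finset.mem_filter.mpr ⟨Finset.mem_univ e, he⟩
        have hsum : ∑ e₂ ∈ Br, (f (uu e₂) - f (vv e₂)) * (χ e₂ a - χ e₂ b)
            = f a - f b := by
          rw [Finset.sum_eq_single e]
          · obtain ⟨hab₀, hu1, hv0, -, -⟩ := hbr e he
            rcases Sym2.eq_iff.mp (hab₀.symm.trans hab) with ⟨h1, h2⟩ | ⟨h1, h2⟩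
            · rw [h1] at hu1; rw [h2] at hv0
              rw [h1, h2, hu1, hv0]; ring
            · rw [h1] at hu1; rw [h2] at hv0
              rw [h1, h2, hu1, hv0]; ring
          · intro e₂ he₂ hne
            have hbr₂ := (Finset.mem_filter.mp he₂).2
            have hsame := (hbr e₂ hbr₂).2.2.2.1 e (Ne.symm hne) a b hab
            rw [hsame, sub_self, mul_zero]
          · intro h; exact absurd heBr h
        show f a - _ = f b - _
        rw [sub_eq_sub_iff_sub_eq_sub, ← Finset.sum_sub_distrib]
        rw [← hsum]
        refine Finset.sum_congr rfl fun e₂ _ => ?_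
        ring
    | refl a => rfl
    | symm a b _ ih => exact ih.symm
    | trans a b c _ _ ih1 ih2 => exact ih1.trans ih2
  -- the pushforwards of the laplacians of f and f' agree
  have hpush : push G G' π (G.laplacian f) = push G G' π (G.laplacian f') := by
    have hfsub : f = f' + ∑ e ∈ Br, (f (uu e) - f (vv e)) • χ e := by
      funext w
      rw [hf']
      simp [Finset.sum_apply]
    have hlapf : G.laplacian f
        = G.laplacian f' + ∑ e ∈ Br, (f (uu e) - f (vv e)) • G.laplacian (χ e) := by
      conv_lhs => rw [hfsub]
      have h1 : G.laplacian (f' + ∑ e ∈ Br, (f (uu e) - f (vv e)) • χ e)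
          = G.laplacian f' + G.laplacian (∑ e ∈ Br, (f (uu e) - f (vv e)) • χ e) :=
        lap_add G _ _
      rw [h1]
      congr 1
      have h2 : G.laplacian (∑ e ∈ Br, (f (uu e) - f (vv e)) • χ e)
          = ∑ e ∈ Br, G.laplacian ((f (uu e) - f (vv e)) • χ e) :=
        map_sum (lapHom G) _ Br
      rw [h2]
      exact Finset.sum_congr rfl fun e _ => lap_smul G _ _
    rw [hlapf]
    have h3 : push G G' π (G.laplacian f' + ∑ e ∈ Br, (f (uu e) - f (vv e)) • G.laplacian (χ e))
        = push G G' π (G.laplacian f')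
          + push G G' π (∑ e ∈ Br, (f (uu e) - f (vv e)) • G.laplacian (χ e)) :=
      push_add' G G' π _ _
    rw [h3]
    have h4 : push G G' π (∑ e ∈ Br, (f (uu e) - f (vv e)) • G.laplacian (χ e)) = 0 := by
      have h5 : push G G' π (∑ e ∈ Br, (f (uu e) - f (vv e)) • G.laplacian (χ e))
          = ∑ e ∈ Br, push G G' π ((f (uu e) - f (vv e)) • G.laplacian (χ e)) :=
        map_sum (pushHom G G' π) _ Br
      rw [h5]
      refine Finset.sum_eq_zero fun e he => ?_
      have hbr₂ := (Finset.mem_filter.mp he).2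
      obtain ⟨hab₀, -, -, -, hlap⟩ := hbr e hbr₂
      have h6 : push G G' π ((f (uu e) - f (vv e)) • G.laplacian (χ e))
          = (f (uu e) - f (vv e)) • push G G' π (G.laplacian (χ e)) :=
        map_zsmul (pushHom G G' π) _ _
      rw [h6, hlap]
      have h7 : push G G' π (delta G (uu e) - delta G (vv e))
          = push G G' π (delta G (uu e)) - push G G' π (delta G (vv e)) :=
        map_sub (pushHom G G' π) _ _
      rw [h7, push_delta, push_delta]
      have hpab : π (uu e) = π (vv e) := (hπ _ _).mpr
        (Relation.EqvGen.rel _ _ ⟨e, hbr₂, hab₀⟩)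
      rw [hpab, sub_self, smul_zero]
    rw [h4, add_zero]
  rw [hpush]
  have hgf : f' = (f' ∘ σ) ∘ π := by
    funext v
    exact (hfib v (σ (π v)) (hσ (π v)).symm)
  rw [hgf, push_lap_comp G G' π ι hπ hιinj hιrange hends (f' ∘ σ)]
  exact ⟨f' ∘ σ, rfl⟩

lemma rankGe_push (hG : G.Connected)
    (hπ : ∀ u v : G.V, π u = π v ↔
      Relation.EqvGen (fun a b => ∃ e, G.IsBridge e ∧ G.ends e = s(a, b)) u v)
    (hιinj : Function.Injective ι)
    (hιrange : ∀ e : G.E, (∃ e', ι e' = e) ↔ ¬ G.IsBridge e)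
    (hends : ∀ e' : G'.E, G'.ends e' = Sym2.map π (G.ends (ι e')))
    (hσ : ∀ v', π (σ v') = v')
    {D : G.Divisor} (h : G.RankGe D 1) : G'.RankGe (push G G' π D) 1 := by
  intro F' hF' hdeg'
  obtain ⟨E, hE, f, hf⟩ := h (pull G G' π σ F') (pull_eff G G' π σ hF')
    (by rw [pull_degree G G' π σ hσ]; exact hdeg')
  refine ⟨push G G' π E, push_eff G G' π hE, ?_⟩
  have hkey : (push G G' π D - F') - push G G' π E
      = push G G' π ((D - pull G G' π σ F') - E) := by
    have h1 : push G G' π ((D - pull G G' π σ F') - E)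
        = (push G G' π D - push G G' π (pull G G' π σ F')) - push G G' π E := by
      rw [push_sub, push_sub]
    rw [h1, push_pull G G' π σ hσ]
  rw [Multigraph.LinEquiv, hkey, hf]
  exact push_prin G G' π σ ι hG hπ hιinj hιrange hends hσ f

lemma rankGe_pull (hG : G.Connected)
    (hπ : ∀ u v : G.V, π u = π v ↔
      Relation.EqvGen (fun a b => ∃ e, G.IsBridge e ∧ G.ends e = s(a, b)) u v)
    (hιinj : Function.Injective ι)
    (hιrange : ∀ e : G.E, (∃ e', ι e' = e) ↔ ¬ G.IsBridge e)
    (hends : ∀ e' : G'.E, G'.ends e' = Sym2.map π (G.ends (ι e')))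
    (hσ : ∀ v', π (σ v') = v')
    {D' : G'.Divisor} (h : G'.RankGe D' 1) : G.RankGe (pull G G' π σ D') 1 := by
  intro F hF hdeg
  obtain ⟨E', hE', g, hg⟩ := h (push G G' π F) (push_eff G G' π hF)
    (by rw [push_degree G G' π]; exact hdeg)
  refine ⟨pull G G' π σ E', pull_eff G G' π σ hE', ?_⟩
  have hY : push G G' π (((pull G G' π σ D' - F) - pull G G' π σ E')
      - G.laplacian (g ∘ π)) = 0 := by
    have h1 : push G G' π (((pull G G' π σ D' - F) - pull G G' π σ E')
        - G.laplacian (g ∘ π))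
        = ((push G G' π (pull G G' π σ D') - push G G' π F)
            - push G G' π (pull G G' π σ E')) - push G G' π (G.laplacian (g ∘ π)) := by
      rw [push_sub, push_sub, push_sub]
    rw [h1, push_pull G G' π σ hσ, push_pull G G' π σ hσ,
      push_lap_comp G G' π ι hπ hιinj hιrange hends g, ← hg]
    abel
  obtain ⟨h₀, hh⟩ := push_zero_prin G G' π σ hG hπ hσ hY
  refine ⟨h₀ + g ∘ π, ?_⟩
  rw [lap_add G h₀ (g ∘ π), ← hh]
  abel

end Stmt9

end Stmt9Aux
/-- Let `G'` be the graph obtained from `G` by contracting every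
bridge of `G` (so the vertices of `G'` are the classes of the equivalence relation
generated by "joined by a bridge", and the edges of `G'` are the non-bridge edges
of `G`). Then `gon(G) = 3` iff `gon(G') = 3`. -/
theorem stmt_9 (G G' : Multigraph) (hG : G.Connected)
    (π : G.V → G'.V) (ι : G'.E → G.E)
    (hιinj : Function.Injective ι)
    (hιrange : ∀ e : G.E, (∃ e', ι e' = e) ↔ ¬ G.IsBridge e)
    (hends : ∀ e' : G'.E, G'.ends e' = Sym2.map π (G.ends (ι e')))
    (hπsurj : Function.Surjective π)
    (hπ : ∀ u v : G.V, π u = π v ↔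
      Relation.EqvGen (fun a b => ∃ e, G.IsBridge e ∧ G.ends e = s(a, b)) u v) :
    (G.gonality = 3 ↔ G'.gonality = 3) := by
  classical
  have hV : Nonempty G.V := hG.1
  have hV' : Nonempty G'.V := ⟨π (Classical.arbitrary G.V)⟩
  have hσ : ∀ v', π ((fun v' => (hπsurj v').choose) v') = v' :=
    fun v' => (hπsurj v').choose_spec
  set σ : G'.V → G.V := fun v' => (hπsurj v').choose
  suffices h : G.gonality = G'.gonality by rw [h]
  have hset : {n : ℕ | ∃ D : G.Divisor, G.Effective D ∧ G.degree D = (n : ℤ) ∧ 1 ≤ G.rank D}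
      = {n : ℕ | ∃ D' : G'.Divisor, G'.Effective D' ∧ G'.degree D' = (n : ℤ) ∧ 1 ≤ G'.rank D'} := by
    ext n
    constructor
    · rintro ⟨D, hD, hdeg, hr⟩
      exact ⟨Stmt9.push G G' π D, Stmt9.push_eff G G' π hD,
        by rw [Stmt9.push_degree G G' π]; exact hdeg,
        (Stmt9.rank_ge_one_iff G' hV' _).mpr
          (Stmt9.rankGe_push G G' π σ ι hG hπ hιinj hιrange hends hσ
            ((Stmt9.rank_ge_one_iff G hV D).mp hr))⟩
    · rintro ⟨D', hD', hdeg', hr'⟩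
      exact ⟨Stmt9.pull G G' π σ D', Stmt9.pull_eff G G' π σ hD',
        by rw [Stmt9.pull_degree G G' π σ hσ]; exact hdeg',
        (Stmt9.rank_ge_one_iff G hV _).mpr
          (Stmt9.rankGe_pull G G' π σ ι hG hπ hιinj hιrange hends hσ
            ((Stmt9.rank_ge_one_iff G' hV' D').mp hr'))⟩
  unfold Multigraph.gonality
  rw [hset]
end

section
/- Let G be a simple, 3-vertex-connected graph with gon(G) = 3, and let D be an effective divisor on G with r(D) = 1 and deg(D) = 3. If D ∼ (v₁) + (v₂) + (v₃) for vertices v₁, v₂, v₃ ∈ V(G), then either v₁ = v₂ = v₃ or v₁, v₂, v₃ are pairwise distinct. -/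
namespace Multigraph

variable {G : Multigraph}

lemma ends_ne {e : G.E} {u v : G.V} (h : G.ends e = s(u, v)) : u ≠ v := by
  intro rfl
  exact G.loopless e (by rw [h]; exact Sym2.mk_isDiag_iff.mpr rfl)

lemma numEdges_symm (u v : G.V) : G.numEdges u v = G.numEdges v u := by
  unfold numEdges
  rw [Sym2.eq_swap]

lemma one_le_numEdges {u v : G.V} {e : G.E} (h : G.ends e = s(u, v)) :
    1 ≤ G.numEdges u v :=
  (Set.ncard_pos (Set.toFinite _)).mpr ⟨e, h⟩

lemma numEdges_le_one (hs : G.Simple) (u v : G.V) : G.numEdges u v ≤ 1 :=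
  (Set.ncard_le_one (Set.toFinite _)).mpr fun a ha b hb => hs a b (ha.trans hb.symm)

lemma degree_sub (D E : G.Divisor) : G.degree (D - E) = G.degree D - G.degree E := by
  simp [degree, Finset.sum_sub_distrib]

lemma degree_laplacian (f : G.V → ℤ) : G.degree (G.laplacian f) = 0 := by
  unfold degree laplacian
  have h : ∀ v w : G.V, (G.numEdges v w : ℤ) * (f v - f w)
      = (G.numEdges v w : ℤ) * f v - (G.numEdges v w : ℤ) * f w := fun v w => by ring
  simp_rw [h, Finset.sum_sub_distrib]
  rw [sub_eq_zero]
  rw [show (∑ v : G.V, ∑ w : G.V, (G.numEdges v w : ℤ) * f w)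
      = ∑ w : G.V, ∑ v : G.V, (G.numEdges v w : ℤ) * f w from Finset.sum_comm]
  apply Finset.sum_congr rfl
  intro v _
  apply Finset.sum_congr rfl
  intro w _
  rw [numEdges_symm]

lemma laplacian_sub (f g : G.V → ℤ) :
    G.laplacian (f - g) = G.laplacian f - G.laplacian g := by
  funext v
  simp only [laplacian, Pi.sub_apply, ← Finset.sum_sub_distrib]
  apply Finset.sum_congr rfl
  intro w _
  ring

lemma degree_delta (x : G.V) (r : ℤ) :
    G.degree (fun z => if z = x then r else 0) = r := by
  simp [degree, Finset.sum_ite_eq']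

lemma degree_eq_of_linEquiv {D E : G.Divisor} (h : G.LinEquiv D E) :
    G.degree D = G.degree E := by
  obtain ⟨f, hf⟩ := h
  have h2 := degree_laplacian (G := G) f
  rw [← hf, degree_sub] at h2
  omega

lemma degree_nonneg_of_effective {D : G.Divisor} (h : G.Effective D) : 0 ≤ G.degree D :=
  Finset.sum_nonneg fun v _ => h v

lemma eq_delta_of_deg_one {F : G.Divisor} (hF : G.Effective F) (h1 : G.degree F = 1) :
    ∃ x, F = fun z => if z = x then 1 else 0 := by
  have hx : ∃ x, 1 ≤ F x := by
    by_contra hc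
    push_neg at hc
    have h2 : G.degree F ≤ 0 := Finset.sum_nonpos fun v _ => by have := hc v; omega
    omega
  obtain ⟨x, hx⟩ := hx
  have hsum : F x + ∑ y ∈ Finset.univ.erase x, F y = G.degree F :=
    Finset.add_sum_erase Finset.univ F (Finset.mem_univ x)
  have hnn : 0 ≤ ∑ y ∈ Finset.univ.erase x, F y :=
    Finset.sum_nonneg fun v _ => hF v
  have hzero : ∑ y ∈ Finset.univ.erase x, F y = 0 := by omega
  have herase0 : ∀ y ∈ Finset.univ.erase x, F y = 0 :=
    (Finset.sum_eq_zero_iff_of_nonneg fun v _ => hF v).mp hzero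
  have hFx : F x = 1 := by omega
  refine ⟨x, funext fun z => ?_⟩
  by_cases hz : z = x
  · subst hz; simp [hFx]
  · simp only [hz, if_false]
    exact herase0 z (Finset.mem_erase.mpr ⟨hz, Finset.mem_univ z⟩)

lemma bddAbove_rankSet (D : G.Divisor) (x₀ : G.V) {d : ℤ} (hd : 0 ≤ d)
    (hdeg : G.degree D = d) :
    BddAbove {r : ℤ | r = -1 ∨ 0 ≤ r ∧ G.RankGe D r} := by
  refine ⟨d, ?_⟩
  rintro r (rfl | ⟨h0, hR⟩)
  · omega
  · obtain ⟨E', hE', hEq⟩ := hR (fun z => if z = x₀ then r else 0)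
      (fun v => by dsimp only; split <;> omega) (degree_delta x₀ r)
    have h1 := degree_eq_of_linEquiv hEq
    rw [degree_sub, degree_delta, hdeg] at h1
    have h2 := degree_nonneg_of_effective hE'
    omega

lemma rankGe_one (D : G.Divisor) (x₀ : G.V) (hdeg : G.degree D = 3)
    (hrank : G.rank D = 1) : G.RankGe D 1 := by
  have hbdd := bddAbove_rankSet D x₀ (by norm_num : (0:ℤ) ≤ 3) hdeg
  have hmem := Int.csSup_mem ⟨-1, Or.inl rfl⟩ hbdd
  have hr : sSup {r : ℤ | r = -1 ∨ 0 ≤ r ∧ G.RankGe D r} = 1 := hrank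
  rw [hr] at hmem
  rcases hmem with h | h
  · norm_num at h
  · exact h.2

lemma coverage_of_local (h3 : G.VertexConnected 3) (x p q : G.V)
    (hpx : p ≠ x) (hqx : q ≠ x) (hpq : p ≠ q)
    (hedge : ∀ (e : G.E) (y : G.V), G.ends e = s(x, y) → y = p ∨ y = q) :
    ∀ z, z = x ∨ z = p ∨ z = q := by
  have hca := h3 {p, q} (by rw [Finset.card_pair hpq]; norm_num)
  intro z
  by_contra hz
  push_neg at hz
  obtain ⟨hzx, hzp, hzq⟩ := hz
  obtain ⟨-, hca2⟩ := hca
  obtain ⟨e, a, b, hends, haA, hbA, hbU⟩ := hca2 {x} ⟨x, Finset.mem_singleton_self x⟩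
    (by intro a ha
        rw [Finset.mem_singleton] at ha
        subst ha
        simp only [Finset.coe_insert, Set.mem_insert_iff, Finset.coe_singleton,
          Set.mem_singleton_iff, not_or]
        exact ⟨fun h => hpx h.symm, fun h => hqx h.symm⟩)
    ⟨z, by simp only [Finset.coe_insert, Set.mem_insert_iff, Finset.coe_singleton,
          Set.mem_singleton_iff, not_or]; exact ⟨hzp, hzq⟩,
       by rw [Finset.mem_singleton]; exact hzx⟩
  rw [Finset.mem_singleton] at haA
  subst haA
  rcases hedge e b hends with rfl | rfl
  · exact hbU (by simp)
  · exact hbU (by simp)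

lemma neighbors_pair (x c₁ c₂ : G.V) (h1 : c₁ ≠ x) (h2 : c₂ ≠ x) (h12 : c₁ ≠ c₂)
    (h3n : ¬ ∃ y₁ y₂ y₃ : G.V, y₁ ≠ y₂ ∧ y₁ ≠ y₃ ∧ y₂ ≠ y₃ ∧
      (∃ e, G.ends e = s(x, y₁)) ∧ (∃ e, G.ends e = s(x, y₂)) ∧ (∃ e, G.ends e = s(x, y₃))) :
    ∃ p q, p ≠ x ∧ q ≠ x ∧ p ≠ q ∧
      ∀ (e : G.E) (y : G.V), G.ends e = s(x, y) → y = p ∨ y = q := by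
  by_cases ha : ∃ y, ∃ e : G.E, G.ends e = s(x, y)
  · obtain ⟨y₁, e₁, he₁⟩ := ha
    have hy₁x : y₁ ≠ x := (ends_ne he₁).symm
    by_cases hb : ∃ y, y ≠ y₁ ∧ ∃ e : G.E, G.ends e = s(x, y)
    · obtain ⟨y₂, hne, e₂, he₂⟩ := hb
      refine ⟨y₁, y₂, hy₁x, (ends_ne he₂).symm, hne.symm, ?_⟩
      intro e y he
      by_contra hy
      push_neg at hy
      exact h3n ⟨y₁, y₂, y, hne.symm, hy.1.symm, hy.2.symm, ⟨e₁, he₁⟩, ⟨e₂, he₂⟩, ⟨e, he⟩⟩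
    · push_neg at hb
      by_cases hc : c₁ = y₁
      · refine ⟨y₁, c₂, hy₁x, h2, by rw [← hc]; exact h12, ?_⟩
        intro e y he
        left
        by_contra hy
        exact hb y hy e he
      · refine ⟨y₁, c₁, hy₁x, h1, fun h => hc h.symm, ?_⟩
        intro e y he
        left
        by_contra hy
        exact hb y hy e he
  · push_neg at ha
    exact ⟨c₁, c₂, h1, h2, h12, fun e y he => absurd he (ha y e)⟩

lemma gonality_le_two (hG : G.Connected) (hs : G.Simple) (a b c : G.V)
    (hab : a ≠ b) (hac : a ≠ c) (hbc : b ≠ c)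
    (hcov : ∀ z : G.V, z = a ∨ z = b ∨ z = c) :
    G.gonality ≤ 2 := by
  set D' : G.Divisor := fun z => (if z = a then (1:ℤ) else 0) + (if z = b then 1 else 0)
    with hD'
  have heff : G.Effective D' := fun v => by
    simp only [hD']; split <;> split <;> norm_num
  have hdeg2 : G.degree D' = 2 := by
    simp [hD', degree, Finset.sum_add_distrib, Finset.sum_ite_eq']
  obtain ⟨e₀, -, x₀, y₀, hends₀, hx₀, hy₀⟩ := hG.2 {c} ⟨c, Finset.mem_singleton_self c⟩
    (fun h => hac (by
      have h2 : a ∈ ({c} : Finset G.V) := by rw [h]; exact Finset.mem_univ a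
      rwa [Finset.mem_singleton] at h2))
  rw [Finset.mem_singleton] at hx₀
  rw [hx₀] at hends₀
  rw [Finset.mem_singleton] at hy₀
  set f : G.V → ℤ := fun z => if z = c then 0 else 1 with hfdef
  have hLab : ∀ z, z ≠ c → G.laplacian f z = (G.numEdges z c : ℤ) := by
    intro z hzc
    unfold laplacian
    rw [Finset.sum_eq_single_of_mem c (Finset.mem_univ c)]
    · simp [hfdef, hzc]
    · intro y _ hyc
      simp [hfdef, hyc, hzc]
  have hLc : G.laplacian f c ≤ -1 := by
    have hterm : ∀ y : G.V, (G.numEdges c y : ℤ) * (f c - f y) ≤ 0 := by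
      intro y
      have h0 : (0:ℤ) ≤ (G.numEdges c y : ℤ) := Int.ofNat_nonneg _
      have h1 : f c - f y ≤ 0 := by
        simp only [hfdef, if_pos rfl]
        split <;> norm_num
      exact mul_nonpos_of_nonneg_of_nonpos h0 h1
    have hsum := Finset.add_sum_erase Finset.univ
      (fun y => (G.numEdges c y : ℤ) * (f c - f y)) (Finset.mem_univ y₀)
    have hrest : ∑ y ∈ Finset.univ.erase y₀, (G.numEdges c y : ℤ) * (f c - f y) ≤ 0 :=
      Finset.sum_nonpos fun y _ => hterm y
    have hy0 : (G.numEdges c y₀ : ℤ) * (f c - f y₀) ≤ -1 := by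
      have h1 : (1:ℤ) ≤ (G.numEdges c y₀ : ℤ) := by exact_mod_cast one_le_numEdges hends₀
      have h2 : f c - f y₀ = -1 := by simp [hfdef, hy₀]
      rw [h2]; linarith
    beta_reduce at hsum
    unfold laplacian
    linarith [hsum, hrest, hy0]
  have hrge : G.RankGe D' 1 := by
    intro F hF hdegF
    obtain ⟨x, rfl⟩ := eq_delta_of_deg_one hF hdegF
    rcases hcov x with h | h | h
    · simp only [h]
      refine ⟨fun z => if z = b then (1:ℤ) else 0,
        fun v => by dsimp only; split <;> norm_num, 0, funext fun z => ?_⟩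
      simp only [Pi.sub_apply, laplacian, Pi.zero_apply, sub_self, mul_zero,
        Finset.sum_const_zero, hD']
      ring
    · simp only [h]
      refine ⟨fun z => if z = a then (1:ℤ) else 0,
        fun v => by dsimp only; split <;> norm_num, 0, funext fun z => ?_⟩
      simp only [Pi.sub_apply, laplacian, Pi.zero_apply, sub_self, mul_zero,
        Finset.sum_const_zero, hD']
      ring
    · simp only [h]
      refine ⟨fun z => (D' z - (if z = c then 1 else 0)) - G.laplacian f z, ?_, f,
        funext fun z => by simp only [Pi.sub_apply]; ring⟩
      intro z
      rcases hcov z with h2 | h2 | h2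
      · rw [h2]
        beta_reduce
        rw [hLab a hac]
        have h1 : (G.numEdges a c : ℤ) ≤ 1 := by exact_mod_cast numEdges_le_one hs a c
        simp [hD', hab, hac]
        omega
      · rw [h2]
        beta_reduce
        rw [hLab b hbc]
        have h1 : (G.numEdges b c : ℤ) ≤ 1 := by exact_mod_cast numEdges_le_one hs b c
        simp [hD', Ne.symm hab, hbc]
        omega
      · rw [h2]
        beta_reduce
        simp [hD', Ne.symm hac, Ne.symm hbc]
        linarith [hLc]
  have hrank1 : (1:ℤ) ≤ G.rank D' := by
    have hbdd := bddAbove_rankSet D' a (by norm_num : (0:ℤ) ≤ 2) hdeg2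
    unfold rank
    exact le_csSup hbdd (Or.inr ⟨by norm_num, hrge⟩)
  unfold gonality
  exact Nat.sInf_le ⟨D', heff, by rw [hdeg2]; norm_num, hrank1⟩

lemma main_aux (G : Multigraph) (hG : G.Connected) (hs : G.Simple)
    (h3 : G.VertexConnected 3) (hgon : G.gonality = 3)
    (D : G.Divisor) (hrank : G.rank D = 1) (hdeg : G.degree D = 3)
    (v w : G.V) (hvw : v ≠ w)
    (hT : G.LinEquiv D (fun z => if z = v then 2 else if z = w then 1 else 0)) : False := by
  set T : G.Divisor := fun z => if z = v then 2 else if z = w then 1 else 0 with hTdef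
  -- a third vertex u
  obtain ⟨⟨u, hu⟩, -⟩ := h3 {v, w} (by rw [Finset.card_pair hvw]; norm_num)
  simp only [Finset.coe_insert, Set.mem_insert_iff, Finset.coe_singleton,
    Set.mem_singleton_iff, not_or] at hu
  obtain ⟨huv, huw⟩ := hu
  -- a second effective divisor in the class, with a chip at u
  have hR1 : G.RankGe D 1 := rankGe_one D u hdeg hrank
  obtain ⟨E', hE', hEq'⟩ := hR1 (fun z => if z = u then 1 else 0)
    (fun z => by dsimp only; split <;> norm_num) (degree_delta u 1)
  set E₁ : G.Divisor := fun z => E' z + (if z = u then 1 else 0) with hE₁def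
  have hE₁ : G.Effective E₁ := fun z => by
    have h := hE' z
    simp only [hE₁def]
    split <;> omega
  have hDE₁ : G.LinEquiv D E₁ := by
    obtain ⟨g, hg⟩ := hEq'
    refine ⟨g, funext fun z => ?_⟩
    have h := congrFun hg z
    simp only [Pi.sub_apply] at h ⊢
    simp only [hE₁def]
    linarith
  have hTE₁ : G.LinEquiv T E₁ := by
    obtain ⟨g, hg⟩ := hDE₁
    obtain ⟨g₁, hg₁⟩ := hT
    refine ⟨g - g₁, ?_⟩
    rw [laplacian_sub, ← hg, ← hg₁]
    abel
  obtain ⟨f, hf⟩ := hTE₁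
  -- the maximum of f
  obtain ⟨m, -, hm⟩ := Finset.exists_max_image Finset.univ f ⟨u, Finset.mem_univ u⟩
  set M := f m with hM
  have hle : ∀ z, f z ≤ M := fun z => hm z (Finset.mem_univ z)
  have hfpt : ∀ z : G.V, T z - E₁ z = ∑ y, (G.numEdges z y : ℤ) * (f z - f y) :=
    fun z => congrFun hf z
  -- key inequality
  have hbeta : ∀ Y : Finset G.V, (∀ y ∈ Y, f y ≠ M) → ∀ x, f x = M →
      (∑ y ∈ Y, (G.numEdges x y : ℤ)) ≤ T x := by
    intro Y hY x hx
    have h1 : ∀ y ∈ Y, (G.numEdges x y : ℤ) ≤ (G.numEdges x y : ℤ) * (f x - f y) := by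
      intro y hy
      have h2 : 1 ≤ f x - f y := by
        have h3 := hle y
        have h4 := hY y hy
        omega
      exact le_mul_of_one_le_right (Int.ofNat_nonneg _) h2
    have hc1 : (∑ y ∈ Y, (G.numEdges x y : ℤ)) ≤ ∑ y ∈ Y, (G.numEdges x y : ℤ) * (f x - f y) :=
      Finset.sum_le_sum h1
    have hc2 : (∑ y ∈ Y, (G.numEdges x y : ℤ) * (f x - f y))
        ≤ ∑ y, (G.numEdges x y : ℤ) * (f x - f y) :=
      Finset.sum_le_sum_of_subset_of_nonneg (Finset.subset_univ Y)
        (fun y _ _ => mul_nonneg (Int.ofNat_nonneg _) (by have := hle y; omega))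
    have hc3 := (hfpt x).symm
    have hc4 := hE₁ x
    have hc5 : T x - E₁ x ≤ T x := by omega
    calc (∑ y ∈ Y, (G.numEdges x y : ℤ)) ≤ _ := hc1
      _ ≤ _ := hc2
      _ = T x - E₁ x := hc3
      _ ≤ T x := hc5
  -- f is not constant
  have hconst : ¬ ∀ z, f z = M := by
    intro hall
    have h0 : T u - E₁ u = 0 := by
      rw [hfpt u]
      apply Finset.sum_eq_zero
      intro y _
      rw [hall u, hall y]
      ring
    have hTu : T u = 0 := by simp [hTdef, huv, huw]
    have h1 : E₁ u = E' u + 1 := by simp [hE₁def]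
    have h2 := hE' u
    rw [hTu, h1] at h0
    omega
  -- adjacency gives positive edge count
  have hadj : ∀ {x y : G.V} {e : G.E}, G.ends e = s(x, y) → (1:ℤ) ≤ G.numEdges x y :=
    fun {x y e} h => by exact_mod_cast one_le_numEdges h
  have hTv : T v = 2 := by simp [hTdef]
  have hTw : T w = 1 := by simp [hTdef, Ne.symm hvw]
  have hT0 : ∀ z, z ≠ v → z ≠ w → T z = 0 := fun z h1 h2 => by simp [hTdef, h1, h2]
  by_cases hA' : ∃ z, f z = M ∧ z ≠ v ∧ z ≠ w
  · by_cases hout : ∃ z, z ≠ v ∧ z ≠ w ∧ f z ≠ M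
    · -- delete {v, w}: contradiction with 3-connectivity
      obtain ⟨z₀, hz₀⟩ := hA'
      obtain ⟨-, hca2⟩ := h3 {v, w} (by rw [Finset.card_pair hvw]; norm_num)
      obtain ⟨e, x, y, hends, hxA, hyA, hyU⟩ := hca2
        (Finset.univ.filter fun z => f z = M ∧ z ≠ v ∧ z ≠ w)
        ⟨z₀, by simp only [Finset.mem_filter]; exact ⟨Finset.mem_univ z₀, hz₀⟩⟩
        (by intro a ha
            simp only [Finset.mem_filter] at ha
            simp only [Finset.coe_insert, Set.mem_insert_iff, Finset.coe_singleton,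
              Set.mem_singleton_iff, not_or]
            exact ⟨ha.2.2.1, ha.2.2.2⟩)
        (by obtain ⟨z, h1, h2, h3'⟩ := hout
            refine ⟨z, ?_, ?_⟩
            · simp only [Finset.coe_insert, Set.mem_insert_iff, Finset.coe_singleton,
                Set.mem_singleton_iff, not_or]
              exact ⟨h1, h2⟩
            · simp only [Finset.mem_filter]
              tauto)
      simp only [Finset.mem_filter] at hxA
      obtain ⟨-, hfx, hxv, hxw⟩ := hxA
      simp only [Finset.coe_insert, Set.mem_insert_iff, Finset.coe_singleton,
        Set.mem_singleton_iff, not_or] at hyU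
      have hyM : f y ≠ M := by
        intro hyM
        exact hyA (by simp only [Finset.mem_filter]
                      exact ⟨Finset.mem_univ y, hyM, hyU.1, hyU.2⟩)
      have hb := hbeta {y} (by simpa using hyM) x hfx
      rw [Finset.sum_singleton, hT0 x hxv hxw] at hb
      have := hadj hends
      omega
    · push_neg at hout
      by_cases hfw : f w = M
      · by_cases hfv : f v = M
        · refine hconst fun z => ?_
          by_cases h1 : z = v
          · rwa [h1]
          by_cases h2 : z = w
          · rwa [h2]
          exact hout z h1 h2
        · -- every vertex except v has f = M; all edges at v end at w
          have hedge : ∀ (e : G.E) (y : G.V), G.ends e = s(v, y) → y = w ∨ y = u := by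
            intro e y he
            have hyv : y ≠ v := (ends_ne he).symm
            have hfy : f y = M := by
              by_cases h1 : y = w
              · rwa [h1]
              · exact hout y hyv h1
            have hb := hbeta {v} (by simpa using hfv) y hfy
            rw [Finset.sum_singleton] at hb
            have h2 : (1:ℤ) ≤ G.numEdges y v := hadj (by rw [he]; exact Sym2.eq_swap)
            by_contra hy
            push_neg at hy
            rw [hT0 y (by intro h; exact hyv h) hy.1] at hb
            omega
          have hcov := coverage_of_local h3 v w u (Ne.symm hvw) huv (by
            intro h; exact huw h.symm) hedge
          have hg2 := gonality_le_two hG hs v w u hvw (Ne.symm huv) (Ne.symm huw) hcov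
          omega
      · by_cases hfv : f v = M
        · -- every vertex except w has f = M; all edges at w end at v
          have hedge : ∀ (e : G.E) (y : G.V), G.ends e = s(w, y) → y = v ∨ y = u := by
            intro e y he
            have hyw : y ≠ w := (ends_ne he).symm
            have hfy : f y = M := by
              by_cases h1 : y = v
              · rwa [h1]
              · exact hout y h1 hyw
            have hb := hbeta {w} (by simpa using hfw) y hfy
            rw [Finset.sum_singleton] at hb
            have h2 : (1:ℤ) ≤ G.numEdges y w := hadj (by rw [he]; exact Sym2.eq_swap)
            by_contra hy
            push_neg at hy
            rw [hT0 y hy.1 hyw] at hb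
            omega
          have hcov := coverage_of_local h3 w v u hvw huw (by
            intro h; exact huv h.symm) hedge
          have hg2 := gonality_le_two hG hs w v u (Ne.symm hvw) (Ne.symm huw) (Ne.symm huv) hcov
          omega
        · -- both v and w outside the max set: contradiction with connectivity
          obtain ⟨z₀, hz₀, -, -⟩ := hA'
          obtain ⟨e, -, x, y, hends, hx, hy⟩ := hG.2 (Finset.univ.filter fun z => f z = M)
            ⟨z₀, by simp only [Finset.mem_filter]; exact ⟨Finset.mem_univ z₀, hz₀⟩⟩
            (by intro h
                have h2 : v ∈ Finset.univ.filter fun z => f z = M := by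
                  rw [h]; exact Finset.mem_univ v
                simp only [Finset.mem_filter] at h2
                exact hfv h2.2)
          simp only [Finset.mem_filter] at hx hy
          have hfx : f x = M := hx.2
          have hfy : f y ≠ M := fun h => hy ⟨Finset.mem_univ y, h⟩
          have hxv : x ≠ v := fun h => hfv (h ▸ hfx)
          have hxw : x ≠ w := fun h => hfw (h ▸ hfx)
          have hb := hbeta {y} (by simpa using hfy) x hfx
          rw [Finset.sum_singleton, hT0 x hxv hxw] at hb
          have := hadj hends
          omega
  · push_neg at hA'
    have hAvw : ∀ z, f z = M → z = v ∨ z = w := by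
      intro z hz
      by_cases h : z = v
      · exact Or.inl h
      · exact Or.inr (hA' z hz h)
    have hfM : ∀ z, z ≠ v → z ≠ w → f z ≠ M := by
      intro z h1 h2 h3'
      rcases hAvw z h3' with h | h
      · exact h1 h
      · exact h2 h
    by_cases hfw : f w = M
    · -- A ∋ w, T w = 1
      have key : ∀ z₁ z₂ : G.V, z₁ ≠ z₂ → z₁ ≠ v → z₂ ≠ v → z₁ ≠ w → z₂ ≠ w →
          (∃ e, G.ends e = s(w, z₁)) → (∃ e, G.ends e = s(w, z₂)) → False := by
        rintro z₁ z₂ h12 h1v h2v h1w h2w ⟨e1, he1⟩ ⟨e2, he2⟩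
        have hb := hbeta {z₁, z₂} (by
          intro y hy
          rcases Finset.mem_insert.mp hy with rfl | hy2
          · exact hfM y h1v h1w
          · rw [Finset.mem_singleton] at hy2
            subst hy2
            exact hfM y h2v h2w) w hfw
        rw [Finset.sum_pair h12, hTw] at hb
        have ha1 := hadj he1
        have ha2 := hadj he2
        omega
      have h3n : ¬ ∃ y₁ y₂ y₃ : G.V, y₁ ≠ y₂ ∧ y₁ ≠ y₃ ∧ y₂ ≠ y₃ ∧
          (∃ e, G.ends e = s(w, y₁)) ∧ (∃ e, G.ends e = s(w, y₂)) ∧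
          (∃ e, G.ends e = s(w, y₃)) := by
        rintro ⟨y₁, y₂, y₃, d12, d13, d23, a1, a2, a3⟩
        have h1w : y₁ ≠ w := (ends_ne a1.choose_spec).symm
        have h2w : y₂ ≠ w := (ends_ne a2.choose_spec).symm
        have h3w : y₃ ≠ w := (ends_ne a3.choose_spec).symm
        by_cases hv1 : y₁ = v
        · exact key y₂ y₃ d23 (fun h => d12 (h.trans hv1.symm).symm)
            (fun h => d13 (h.trans hv1.symm).symm) h2w h3w a2 a3
        · by_cases hv2 : y₂ = v
          · exact key y₁ y₃ d13 hv1 (fun h => d23 (h.trans hv2.symm).symm) h1w h3w a1 a3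
          · exact key y₁ y₂ d12 hv1 hv2 h1w h2w a1 a2
      obtain ⟨p, q, hpx, hqx, hpq, hedge⟩ := neighbors_pair w v u hvw huw (Ne.symm huv) h3n
      have hcov := coverage_of_local h3 w p q hpx hqx hpq hedge
      have hg2 := gonality_le_two hG hs w p q (Ne.symm hpx) (Ne.symm hqx) hpq hcov
      omega
    · -- A = {v}, T v = 2
      have hfv : f v = M := by
        rcases hAvw m hM.symm with h | h
        · rw [← h]
        · rw [← h] at hfw
          exact absurd hM.symm hfw
      have key3 : ∀ z₁ z₂ z₃ : G.V, z₁ ≠ z₂ → z₁ ≠ z₃ → z₂ ≠ z₃ →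
          (∃ e, G.ends e = s(v, z₁)) → (∃ e, G.ends e = s(v, z₂)) →
          (∃ e, G.ends e = s(v, z₃)) → False := by
        rintro z₁ z₂ z₃ d12 d13 d23 ⟨e1, he1⟩ ⟨e2, he2⟩ ⟨e3, he3⟩
        have h1v : z₁ ≠ v := (ends_ne he1).symm
        have h2v : z₂ ≠ v := (ends_ne he2).symm
        have h3v : z₃ ≠ v := (ends_ne he3).symm
        have hfz : ∀ z : G.V, z ≠ v → f z ≠ M := by
          intro z hzv hzM
          rcases hAvw z hzM with h | h
          · exact hzv h
          · rw [h] at hzM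
            exact hfw hzM
        have hb := hbeta {z₁, z₂, z₃} (by
          intro y hy
          rcases Finset.mem_insert.mp hy with rfl | hy2
          · exact hfz y h1v
          rcases Finset.mem_insert.mp hy2 with rfl | hy3
          · exact hfz y h2v
          rw [Finset.mem_singleton] at hy3
          subst hy3
          exact hfz y h3v) v hfv
        rw [Finset.sum_insert (by simp [d12, d13]), Finset.sum_pair d23, hTv] at hb
        have ha1 := hadj he1
        have ha2 := hadj he2
        have ha3 := hadj he3
        omega
      have h3n : ¬ ∃ y₁ y₂ y₃ : G.V, y₁ ≠ y₂ ∧ y₁ ≠ y₃ ∧ y₂ ≠ y₃ ∧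
          (∃ e, G.ends e = s(v, y₁)) ∧ (∃ e, G.ends e = s(v, y₂)) ∧
          (∃ e, G.ends e = s(v, y₃)) := by
        rintro ⟨y₁, y₂, y₃, d12, d13, d23, a1, a2, a3⟩
        exact key3 y₁ y₂ y₃ d12 d13 d23 a1 a2 a3
      obtain ⟨p, q, hpx, hqx, hpq, hedge⟩ := neighbors_pair v w u (Ne.symm hvw) huv (Ne.symm huw) h3n
      have hcov := coverage_of_local h3 v p q hpx hqx hpq hedge
      have hg2 := gonality_le_two hG hs v p q (Ne.symm hpx) (Ne.symm hqx) hpq hcov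
      omega

end Multigraph

/-- Let `G` be simple and 3-vertex-connected with `gon(G) = 3`, and
let `D` be effective with `r(D) = 1` and `deg(D) = 3`. If `D ∼ (v₁) + (v₂) + (v₃)`,
then either `v₁ = v₂ = v₃` or `v₁, v₂, v₃` are pairwise distinct. -/
theorem stmt_12 (G : Multigraph) (hG : G.Connected) (hs : G.Simple)
    (h3 : G.VertexConnected 3) (hgon : G.gonality = 3)
    (D : G.Divisor) (hD : G.Effective D) (hrank : G.rank D = 1)
    (hdeg : G.degree D = 3) (v₁ v₂ v₃ : G.V)
    (heq : G.LinEquiv D (fun w =>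
      (if w = v₁ then 1 else 0) + (if w = v₂ then 1 else 0) + (if w = v₃ then 1 else 0))) :
    (v₁ = v₂ ∧ v₂ = v₃) ∨ (v₁ ≠ v₂ ∧ v₁ ≠ v₃ ∧ v₂ ≠ v₃) := by
  by_cases h12 : v₁ = v₂
  · by_cases h13 : v₁ = v₃
    · exact Or.inl ⟨h12, h12 ▸ h13⟩
    · exfalso
      subst h12
      refine Multigraph.main_aux G hG hs h3 hgon D hrank hdeg v₁ v₃ h13 ?_
      have he : (fun z : G.V => (if z = v₁ then (1:ℤ) else 0) + (if z = v₁ then 1 else 0)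
          + (if z = v₃ then 1 else 0))
          = fun z => if z = v₁ then 2 else if z = v₃ then 1 else 0 := by
        funext z
        by_cases h1 : z = v₁ <;> simp [h1, h13]
      rw [he] at heq
      exact heq
  · by_cases h13 : v₁ = v₃
    · exfalso
      subst h13
      refine Multigraph.main_aux G hG hs h3 hgon D hrank hdeg v₁ v₂ h12 ?_
      have he : (fun z : G.V => (if z = v₁ then (1:ℤ) else 0) + (if z = v₂ then 1 else 0)
          + (if z = v₁ then 1 else 0))
          = fun z => if z = v₁ then 2 else if z = v₂ then 1 else 0 := by
        funext z
        by_cases h1 : z = v₁ <;> simp [h1, h12]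
      rw [he] at heq
      exact heq
    · by_cases h23 : v₂ = v₃
      · exfalso
        subst h23
        refine Multigraph.main_aux G hG hs h3 hgon D hrank hdeg v₂ v₁ (Ne.symm h12) ?_
        have he : (fun z : G.V => (if z = v₁ then (1:ℤ) else 0) + (if z = v₂ then 1 else 0)
            + (if z = v₂ then 1 else 0))
            = fun z => if z = v₂ then 2 else if z = v₁ then 1 else 0 := by
          funext z
          by_cases h1 : z = v₂ <;> by_cases h2 : z = v₁ <;>
            simp [h1, h2, h12, Ne.symm h12]
        rw [he] at heq
        exact heq
      · exact Or.inr ⟨h12, h13, h23⟩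
end
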